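/- arXiv:1705.03827 — 8 statements merged into one kernel-verified Lean document; each statement's English description precedes it below -/
import Mathlib

section
/- As N → ∞, the normalized sum d_N/N = N⁻¹ ∑_{i=1}^N π_i(1 − π_i) converges ℙ-almost surely to d = f(1 − 𝔼[X₁²]/𝔼[X₁]²) + f(1−f)·𝔼[X₁²]/𝔼[X₁]² (equivalently, to f − f²·𝔼[X₁²]/𝔼[X₁]²). (Lemma 1 of the paper.) -/
open MeasureTheory ProbabilityTheory Filter Topology

/-- Lemma 1 of the paper: almost-sure limit of `d_N / N = N⁻¹ ∑ᵢ πᵢ(1-πᵢ)`. -/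
theorem stmt_0
    {Ω : Type*} [MeasurableSpace Ω] (P : Measure Ω) [IsProbabilityMeasure P]
    (Y X : ℕ → Ω → ℝ)
    (hmeas : ∀ i, Measurable fun ω => (Y i ω, X i ω))
    (hindep : iIndepFun (fun i ω => (Y i ω, X i ω)) P)
    (hident : ∀ i, IdentDistrib (fun ω => (Y i ω, X i ω)) (fun ω => (Y 0 ω, X 0 ω)) P P)
    (hpos : ∀ i, ∀ᵐ ω ∂P, 0 < X i ω)
    (hm2 : Integrable (fun ω => X 0 ω ^ 2) P)
    (hminv : Integrable (fun ω => (X 0 ω)⁻¹) P)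
    (n : ℕ → ℕ) (f : ℝ) (hf0 : 0 < f) (hf1 : f < 1)
    (hfN : Tendsto (fun N : ℕ => (n N : ℝ) / N) atTop (𝓝 f)) :
    ∀ᵐ ω ∂P,
      Tendsto (fun N : ℕ => (N : ℝ)⁻¹ * ∑ i ∈ Finset.range N,
          ((n N : ℝ) * X i ω / ∑ j ∈ Finset.range N, X j ω) *
            (1 - (n N : ℝ) * X i ω / ∑ j ∈ Finset.range N, X j ω)) atTop
        (𝓝 (f * (1 - (∫ ω, X 0 ω ^ 2 ∂P) / (∫ ω, X 0 ω ∂P) ^ 2) +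
            f * (1 - f) * ((∫ ω, X 0 ω ^ 2 ∂P) / (∫ ω, X 0 ω ∂P) ^ 2))) := by
  -- measurability of X i
  have hXmeas : ∀ i, Measurable (X i) := fun i => measurable_snd.comp (hmeas i)
  -- independence of the X i and X i ^ 2
  have hXindep : iIndepFun X P := by
    have := hindep.comp (fun _ => Prod.snd) (fun _ => measurable_snd)
    exact this
  have hX2indep : iIndepFun (fun i ω => X i ω ^ 2) P := by
    have := hindep.comp (fun _ (p : ℝ × ℝ) => p.2 ^ 2)
      (fun _ => (measurable_snd.pow_const 2))
    exact this
  have hXident : ∀ i, IdentDistrib (X i) (X 0) P P :=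
    fun i => (hident i).comp measurable_snd
  have hX2ident : ∀ i, IdentDistrib (fun ω => X i ω ^ 2) (fun ω => X 0 ω ^ 2) P P :=
    fun i => (hident i).comp (measurable_snd.pow_const 2)
  -- integrability of X 0
  have hXint : Integrable (X 0) P := by
    apply Integrable.mono ((integrable_const (1:ℝ)).add hm2)
      (hXmeas 0).aestronglyMeasurable
    filter_upwards with ω
    simp only [Pi.add_apply, Real.norm_eq_abs]
    rw [abs_of_nonneg (by positivity : (0:ℝ) ≤ 1 + X 0 ω ^ 2)]
    rcases abs_cases (X 0 ω) with ⟨h, _⟩ | ⟨h, _⟩ <;>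
      nlinarith [sq_nonneg (X 0 ω - 1), sq_nonneg (X 0 ω + 1)]
  -- strong laws
  have hsl1 := strong_law_ae_real X hXint
    (fun i j hij => hXindep.indepFun hij) hXident
  have hsl2 := strong_law_ae_real (fun i ω => X i ω ^ 2) hm2
    (fun i j hij => hX2indep.indepFun hij) hX2ident
  have hposall : ∀ᵐ ω ∂P, ∀ i, 0 < X i ω := ae_all_iff.2 hpos
  -- the mean is positive
  have hμ1pos : 0 < ∫ ω, X 0 ω ∂P := by
    apply (integral_pos_iff_support_of_nonneg_ae
      (f := X 0) (μ := P) ((hpos 0).mono fun ω h => h.le) hXint).2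
    · have : (Function.support (X 0))ᶜ ⊆ {ω | ¬ (0 < X 0 ω)} := by
        intro ω hω
        simp only [Function.mem_support, not_not, Set.mem_compl_iff] at hω
        simp [hω]
      have h0 : P ((Function.support (X 0))ᶜ) = 0 :=
        measure_mono_null this (by simpa [ae_iff] using hpos 0)
      have := prob_compl_eq_zero_iff (μ := P)
        (measurableSet_support (hXmeas 0)) |>.1 h0
      simp [this]
  set μ1 := ∫ ω, X 0 ω ∂P with hμ1
  set μ2 := ∫ ω, X 0 ω ^ 2 ∂P with hμ2
  filter_upwards [hsl1, hsl2, hposall] with ω h1 h2 hposω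
  -- the limit function, expressed with means
  have hlim : Tendsto (fun N : ℕ =>
      (n N : ℝ) / N - ((n N : ℝ) / N) ^ 2 *
        (((∑ i ∈ Finset.range N, X i ω ^ 2) / N) /
          ((∑ j ∈ Finset.range N, X j ω) / N) ^ 2)) atTop
      (𝓝 (f - f ^ 2 * (μ2 / μ1 ^ 2))) := by
    apply hfN.sub
    exact ((hfN.pow 2).mul (h2.div (h1.pow 2) (by positivity)))
  have hval : f * (1 - μ2 / μ1 ^ 2) + f * (1 - f) * (μ2 / μ1 ^ 2)
      = f - f ^ 2 * (μ2 / μ1 ^ 2) := by ring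
  rw [hval]
  apply hlim.congr'
  filter_upwards [eventually_ge_atTop 1] with N hN
  have hNpos : (0:ℝ) < N := by exact_mod_cast hN
  have hSpos : 0 < ∑ j ∈ Finset.range N, X j ω := by
    apply Finset.sum_pos (fun j _ => hposω j)
    exact Finset.nonempty_range_iff.2 (by omega)
  set S := ∑ j ∈ Finset.range N, X j ω with hS
  have hsum : ∑ i ∈ Finset.range N,
      ((n N : ℝ) * X i ω / S) * (1 - (n N : ℝ) * X i ω / S)
      = (n N : ℝ) - ((n N : ℝ) / S) ^ 2 * ∑ i ∈ Finset.range N, X i ω ^ 2 := by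
    have : ∀ i ∈ Finset.range N,
        ((n N : ℝ) * X i ω / S) * (1 - (n N : ℝ) * X i ω / S)
        = ((n N : ℝ) / S) * X i ω - ((n N : ℝ) / S) ^ 2 * X i ω ^ 2 := by
      intro i _; field_simp
    rw [Finset.sum_congr rfl this, Finset.sum_sub_distrib, ← Finset.mul_sum,
      ← Finset.mul_sum, ← hS]
    field_simp
  rw [hsum]
  field_simp
end

section
/- For every fixed y ∈ ℝ, as N → ∞, N⁻¹ ∑_{i=1}^N π_i⁻¹ (1{Y_i ≤ y} − F_N(y)) converges ℙ-almost surely to (𝔼[X₁]/f)·(k₋₁(y) − 𝔼[X₁⁻¹]·F(y)), where k₋₁(y) = 𝔼[X₁⁻¹ 1{Y₁ ≤ y}]; equivalently, when F(y) > 0 the limit equals (𝔼[X₁]/f)(K₋₁(y) − 𝔼[X₁⁻¹])F(y) with K₋₁(y) = 𝔼[X₁⁻¹ | Y₁ ≤ y]. (Lemma 2, first statement.) -/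
open MeasureTheory ProbabilityTheory Filter Topology

/-- Lemma 2, first statement: for every fixed `y`,
`N⁻¹ ∑ᵢ πᵢ⁻¹ (1{Yᵢ ≤ y} − F_N(y)) → (𝔼[X₁]/f)(k₋₁(y) − 𝔼[X₁⁻¹] F(y))` a.s. -/
theorem stmt_2
    {Ω : Type*} [MeasurableSpace Ω] (P : Measure Ω) [IsProbabilityMeasure P]
    (Y X : ℕ → Ω → ℝ)
    (hmeas : ∀ i, Measurable fun ω => (Y i ω, X i ω))
    (hindep : iIndepFun (fun i ω => (Y i ω, X i ω)) P)
    (hident : ∀ i, IdentDistrib (fun ω => (Y i ω, X i ω)) (fun ω => (Y 0 ω, X 0 ω)) P P)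
    (hpos : ∀ i, ∀ᵐ ω ∂P, 0 < X i ω)
    (hm2 : Integrable (fun ω => X 0 ω ^ 2) P)
    (hminv : Integrable (fun ω => (X 0 ω)⁻¹) P)
    (n : ℕ → ℕ) (f : ℝ) (hf0 : 0 < f) (hf1 : f < 1)
    (hfN : Tendsto (fun N : ℕ => (n N : ℝ) / N) atTop (𝓝 f)) :
    ∀ y : ℝ, ∀ᵐ ω ∂P,
      Tendsto (fun N : ℕ => (N : ℝ)⁻¹ * ∑ i ∈ Finset.range N,
          ((n N : ℝ) * X i ω / ∑ j ∈ Finset.range N, X j ω)⁻¹ *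
            ((if Y i ω ≤ y then (1 : ℝ) else 0) -
              (N : ℝ)⁻¹ * ∑ k ∈ Finset.range N, if Y k ω ≤ y then (1 : ℝ) else 0)) atTop
        (𝓝 ((∫ ω, X 0 ω ∂P) / f *
            ((∫ ω, (X 0 ω)⁻¹ * (if Y 0 ω ≤ y then (1 : ℝ) else 0) ∂P) -
              (∫ ω, (X 0 ω)⁻¹ ∂P) * (P {ω | Y 0 ω ≤ y}).toReal))) := by
  intro y
  -- measurable transforms of the pair
  have hsy : MeasurableSet {p : ℝ × ℝ | p.1 ≤ y} :=
    measurableSet_le measurable_fst measurable_const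
  have hφXm : Measurable (fun p : ℝ × ℝ => p.2) := measurable_snd
  have hφIm : Measurable (fun p : ℝ × ℝ => (p.2)⁻¹) := measurable_snd.inv
  have hφFm : Measurable (fun p : ℝ × ℝ => if p.1 ≤ y then (1 : ℝ) else 0) :=
    Measurable.ite hsy measurable_const measurable_const
  have hφAm : Measurable
      (fun p : ℝ × ℝ => (p.2)⁻¹ * (if p.1 ≤ y then (1 : ℝ) else 0)) := hφIm.mul hφFm
  -- generic SLLN for measurable transforms
  have slln : ∀ (φ : ℝ × ℝ → ℝ), Measurable φ →
      Integrable (fun ω => φ (Y 0 ω, X 0 ω)) P →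
      ∀ᵐ ω ∂P, Tendsto (fun N : ℕ => (∑ i ∈ Finset.range N, φ (Y i ω, X i ω)) / N)
        atTop (𝓝 (∫ ω, φ (Y 0 ω, X 0 ω) ∂P)) := by
    intro φ hφ hint
    exact strong_law_ae_real (fun i ω => φ (Y i ω, X i ω)) hint
      (fun i j hij => (hindep.comp (fun _ => φ) (fun _ => hφ)).indepFun hij)
      (fun i => (hident i).comp hφ)
  -- integrability of the four transforms
  have hintX : Integrable (fun ω => X 0 ω) P := by
    refine (hm2.add (integrable_const 1)).mono
      ((hφXm.comp (hmeas 0)).aestronglyMeasurable) (Filter.Eventually.of_forall fun ω => ?_)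
    simp only [Real.norm_eq_abs, Pi.add_apply]
    rw [abs_of_pos (by positivity : (0:ℝ) < X 0 ω ^ 2 + 1)]
    nlinarith [sq_nonneg (|X 0 ω| - 1), sq_abs (X 0 ω), abs_nonneg (X 0 ω)]
  have hintA : Integrable (fun ω => (X 0 ω)⁻¹ * (if Y 0 ω ≤ y then (1 : ℝ) else 0)) P := by
    refine hminv.mono ((hφAm.comp (hmeas 0)).aestronglyMeasurable)
      (Filter.Eventually.of_forall fun ω => ?_)
    simp only [Real.norm_eq_abs, abs_mul]
    have : |if Y 0 ω ≤ y then (1 : ℝ) else 0| ≤ 1 := by split_ifs <;> simp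
    calc |(X 0 ω)⁻¹| * |if Y 0 ω ≤ y then (1 : ℝ) else 0| ≤ |(X 0 ω)⁻¹| * 1 := by
          exact mul_le_mul_of_nonneg_left this (abs_nonneg _)
      _ = |(X 0 ω)⁻¹| := mul_one _
  have hintF : Integrable (fun ω => if Y 0 ω ≤ y then (1 : ℝ) else 0) P := by
    refine (integrable_const (1 : ℝ)).mono ((hφFm.comp (hmeas 0)).aestronglyMeasurable)
      (Filter.Eventually.of_forall fun ω => ?_)
    simp only [Real.norm_eq_abs]
    split_ifs <;> simp
  -- value of the indicator integral
  have hsY : MeasurableSet {ω | Y 0 ω ≤ y} :=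
    measurableSet_le (measurable_fst.comp (hmeas 0)) measurable_const
  have hFval : ∫ ω, (if Y 0 ω ≤ y then (1 : ℝ) else 0) ∂P = (P {ω | Y 0 ω ≤ y}).toReal := by
    have : (fun ω => if Y 0 ω ≤ y then (1 : ℝ) else 0)
        = Set.indicator {ω | Y 0 ω ≤ y} (fun _ => (1 : ℝ)) := by
      ext ω; simp [Set.indicator_apply, Set.mem_setOf_eq]
    rw [this, integral_indicator_const (1 : ℝ) hsY, smul_eq_mul, mul_one]
    rfl
  filter_upwards [slln _ hφXm hintX, slln _ hφIm hminv, slln _ hφAm hintA, slln _ hφFm hintF]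
    with ω hX hI hA hF
  -- rewrite the target constant
  have hrw : (∫ ω, X 0 ω ∂P) / f *
      ((∫ ω, (X 0 ω)⁻¹ * (if Y 0 ω ≤ y then (1 : ℝ) else 0) ∂P) -
        (∫ ω, (X 0 ω)⁻¹ ∂P) * (P {ω | Y 0 ω ≤ y}).toReal)
      = ((∫ ω, X 0 ω ∂P) * f⁻¹) *
        ((∫ ω, (X 0 ω)⁻¹ * (if Y 0 ω ≤ y then (1 : ℝ) else 0) ∂P) -
          (P {ω | Y 0 ω ≤ y}).toReal * (∫ ω, (X 0 ω)⁻¹ ∂P)) := by ring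
  rw [hrw, ← hFval]
  -- limit of the reparametrized sequence
  have hG : Tendsto (fun N : ℕ =>
      ((∑ j ∈ Finset.range N, X j ω) / N * ((n N : ℝ) / N)⁻¹) *
        ((∑ i ∈ Finset.range N, (X i ω)⁻¹ * (if Y i ω ≤ y then (1 : ℝ) else 0)) / N -
          ((∑ k ∈ Finset.range N, if Y k ω ≤ y then (1 : ℝ) else 0) / N) *
            ((∑ i ∈ Finset.range N, (X i ω)⁻¹) / N))) atTop
      (𝓝 (((∫ ω, X 0 ω ∂P) * f⁻¹) *
        ((∫ ω, (X 0 ω)⁻¹ * (if Y 0 ω ≤ y then (1 : ℝ) else 0) ∂P) -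
          (∫ ω, (if Y 0 ω ≤ y then (1 : ℝ) else 0) ∂P) * (∫ ω, (X 0 ω)⁻¹ ∂P)))) := by
    exact (hX.mul (hfN.inv₀ hf0.ne')).mul (hA.sub (hF.mul hI))
  refine hG.congr' ?_
  filter_upwards [eventually_ge_atTop 1] with N hN1
  have hN : (N : ℝ) ≠ 0 := Nat.cast_ne_zero.mpr (by omega)
  set S := ∑ j ∈ Finset.range N, X j ω with hS
  set c := (N : ℝ)⁻¹ * ∑ k ∈ Finset.range N, if Y k ω ≤ y then (1 : ℝ) else 0 with hc
  have hsummand : ∀ i ∈ Finset.range N,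
      ((n N : ℝ) * X i ω / S)⁻¹ * ((if Y i ω ≤ y then (1 : ℝ) else 0) - c)
        = (S / (n N : ℝ)) * ((X i ω)⁻¹ * ((if Y i ω ≤ y then (1 : ℝ) else 0) - c)) := by
    intro i _
    rw [inv_div, ← div_div, div_eq_mul_inv (S / (n N : ℝ)) (X i ω), mul_assoc]
  rw [show ((N : ℝ)⁻¹ * ∑ i ∈ Finset.range N,
        ((n N : ℝ) * X i ω / ∑ j ∈ Finset.range N, X j ω)⁻¹ *
          ((if Y i ω ≤ y then (1 : ℝ) else 0) -
            (N : ℝ)⁻¹ * ∑ k ∈ Finset.range N, if Y k ω ≤ y then (1 : ℝ) else 0))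
      = (N : ℝ)⁻¹ * ∑ i ∈ Finset.range N,
        (S / (n N : ℝ)) * ((X i ω)⁻¹ * ((if Y i ω ≤ y then (1 : ℝ) else 0) - c))
    from by rw [Finset.sum_congr rfl hsummand]]
  rw [← Finset.mul_sum]
  have hsplit : ∑ i ∈ Finset.range N, (X i ω)⁻¹ * ((if Y i ω ≤ y then (1 : ℝ) else 0) - c)
      = (∑ i ∈ Finset.range N, (X i ω)⁻¹ * (if Y i ω ≤ y then (1 : ℝ) else 0))
        - c * ∑ i ∈ Finset.range N, (X i ω)⁻¹ := by
    rw [Finset.mul_sum]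
    rw [← Finset.sum_sub_distrib]
    refine Finset.sum_congr rfl fun i _ => by ring
  rw [hsplit]
  rcases eq_or_ne ((n N : ℝ)) 0 with hn | hn
  · simp [hn, hc]
  · rw [hc]
    field_simp
end

section
/- For every fixed y ∈ ℝ, as N → ∞, S_N²(y)/N converges ℙ-almost surely to ((𝔼[X₁]/f)·k₋₁(y) − F(y))·(1 − F(y)) − (𝔼[X₁]/f)·(k₋₁(y) − 𝔼[X₁⁻¹]F(y))·F(y) − (f²/d)·(F(y) − k₁(y)/𝔼[X₁])², where k_α(y) = 𝔼[X₁^α 1{Y₁ ≤ y}] for α = ±1 and d = f(1 − 𝔼[X₁²]/𝔼[X₁]²) + f(1−f)·𝔼[X₁²]/𝔼[X₁]². (Lemma 3, second statement, eq. (limite_s2n).) -/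
open MeasureTheory ProbabilityTheory Filter Topology

/-- First-order inclusion probability `πᵢ = n_N Xᵢ / ∑_{j<N} Xⱼ`. -/
noncomputable def incl {Ω : Type*} (X : ℕ → Ω → ℝ) (n : ℕ → ℕ) (N i : ℕ) (ω : Ω) : ℝ :=
  (n N : ℝ) * X i ω / ∑ j ∈ Finset.range N, X j ω

/-- Indicator `1{Yᵢ ≤ y}`. -/
noncomputable def indLE {Ω : Type*} (Y : ℕ → Ω → ℝ) (y : ℝ) (i : ℕ) (ω : Ω) : ℝ :=
  if Y i ω ≤ y then 1 else 0

/-- Population distribution function `F_N(y) = N⁻¹ ∑_{i<N} 1{Yᵢ ≤ y}`. -/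
noncomputable def empDF {Ω : Type*} (Y : ℕ → Ω → ℝ) (y : ℝ) (N : ℕ) (ω : Ω) : ℝ :=
  (N : ℝ)⁻¹ * ∑ i ∈ Finset.range N, indLE Y y i ω

/-- The quantity `Z_{i,N}(y)` of Lemma 3 of the paper. -/
noncomputable def Zin {Ω : Type*} (Y X : ℕ → Ω → ℝ) (n : ℕ → ℕ) (y : ℝ) (i N : ℕ)
    (ω : Ω) : ℝ :=
  (indLE Y y i ω - empDF Y y N ω) -
    incl X n N i ω *
      (∑ j ∈ Finset.range N, (1 - incl X n N j ω) * (indLE Y y j ω - empDF Y y N ω)) /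
      (∑ j ∈ Finset.range N, incl X n N j ω * (1 - incl X n N j ω))

/-- The quantity `S_N²(y) = ∑_{i<N} (πᵢ⁻¹ − 1) Z_{i,N}(y)²` of Lemma 3 of the paper. -/
noncomputable def SN2 {Ω : Type*} (Y X : ℕ → Ω → ℝ) (n : ℕ → ℕ) (y : ℝ) (N : ℕ)
    (ω : Ω) : ℝ :=
  ∑ i ∈ Finset.range N, ((incl X n N i ω)⁻¹ - 1) * (Zin Y X n y i N ω) ^ 2

section auxlemmas

variable {Ω : Type*} [MeasurableSpace Ω] {P : Measure Ω} [IsProbabilityMeasure P]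

lemma slln_pair' (Y X : ℕ → Ω → ℝ)
    (hindep : iIndepFun (fun i ω => (Y i ω, X i ω)) P)
    (hident : ∀ i, IdentDistrib (fun ω => (Y i ω, X i ω)) (fun ω => (Y 0 ω, X 0 ω)) P P)
    (g : ℝ × ℝ → ℝ) (hg : Measurable g)
    (G : ℕ → Ω → ℝ) (hG : ∀ i, G i = fun ω => g (Y i ω, X i ω))
    (hint : Integrable (G 0) P) (c : ℝ) (hc : (∫ ω, G 0 ω ∂P) = c) :
    ∀ᵐ ω ∂P, Tendsto (fun N : ℕ => (∑ i ∈ Finset.range N, G i ω) / N) atTop (𝓝 c) := by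
  have h := strong_law_ae_real G hint
    (fun i j hij => by
      rw [Function.onFun, hG i, hG j]
      exact (hindep.indepFun hij).comp hg hg)
    (fun i => by rw [hG i, hG 0]; exact (hident i).comp hg)
  rwa [hc] at h

lemma alg_aux (Nr m S Pi PiI PI P2 E : ℝ) (hN : Nr ≠ 0) (hm : m ≠ 0) (hS : S ≠ 0) :
    ((S / m) * ((1 - 2 * E) * PiI + E ^ 2 * Pi) - Nr * E * (1 - E) -
        (m * E - m / S * PI) * ((m * E - m / S * PI) / (m - (m / S) ^ 2 * P2))) / Nr
      = ((S / Nr) / (m / Nr)) * ((1 - 2 * E) * (PiI / Nr) + E ^ 2 * (Pi / Nr)) -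
          E * (1 - E) -
          ((m / Nr) * E - ((m / Nr) / (S / Nr)) * (PI / Nr)) *
            (((m / Nr) * E - ((m / Nr) / (S / Nr)) * (PI / Nr)) /
              ((m / Nr) - ((m / Nr) / (S / Nr)) ^ 2 * (P2 / Nr))) := by
  have h1 : (m / Nr) / (S / Nr) = m / S := div_div_div_cancel_right₀ hN m S
  have h0 : (S / Nr) / (m / Nr) = S / m := div_div_div_cancel_right₀ hN S m
  rw [h1, h0]
  have h2 : (m / Nr) * E - (m / S) * (PI / Nr) = (m * E - m / S * PI) / Nr := by
    field_simp
  have h3 : (m / Nr) - (m / S) ^ 2 * (P2 / Nr) = (m - (m / S) ^ 2 * P2) / Nr := by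
    field_simp
  rw [h2, h3]
  have h4 : ((m * E - m / S * PI) / Nr) / ((m - (m / S) ^ 2 * P2) / Nr)
      = (m * E - m / S * PI) / (m - (m / S) ^ 2 * P2) := by
    by_cases hC : m - (m / S) ^ 2 * P2 = 0
    · rw [hC, zero_div, div_zero, div_zero]
    · exact div_div_div_cancel_right₀ hN _ _
  rw [h4]
  generalize (m * E - m / S * PI) / (m - (m / S) ^ 2 * P2) = q
  field_simp

end auxlemmas

lemma SN2_eq {Ω : Type*} (Y X : ℕ → Ω → ℝ) (n : ℕ → ℕ) (y : ℝ) (N : ℕ) (ω : Ω)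
    (hN : 0 < N) (hn : 0 < n N) (hX : ∀ i, 0 < X i ω) :
    SN2 Y X n y N ω =
      ((∑ i ∈ Finset.range N, X i ω) / (n N : ℝ)) *
          ((1 - 2 * empDF Y y N ω) * (∑ i ∈ Finset.range N, (X i ω)⁻¹ * indLE Y y i ω)
            + empDF Y y N ω ^ 2 * ∑ i ∈ Finset.range N, (X i ω)⁻¹)
        - (N : ℝ) * empDF Y y N ω * (1 - empDF Y y N ω)
        - ((n N : ℝ) * empDF Y y N ω -
              (n N : ℝ) / (∑ i ∈ Finset.range N, X i ω) *
                ∑ i ∈ Finset.range N, X i ω * indLE Y y i ω) *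
          (((n N : ℝ) * empDF Y y N ω -
              (n N : ℝ) / (∑ i ∈ Finset.range N, X i ω) *
                ∑ i ∈ Finset.range N, X i ω * indLE Y y i ω) /
            ((n N : ℝ) - ((n N : ℝ) / (∑ i ∈ Finset.range N, X i ω)) ^ 2 *
                ∑ i ∈ Finset.range N, X i ω ^ 2)) := by
  have hNR : (0:ℝ) < N := by exact_mod_cast hN
  have hnR : (0:ℝ) < n N := by exact_mod_cast hn
  have hS : (0:ℝ) < ∑ i ∈ Finset.range N, X i ω :=
    Finset.sum_pos (fun i _ => hX i) ⟨0, Finset.mem_range.mpr hN⟩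
  have hIv : ∀ i, indLE Y y i ω = 0 ∨ indLE Y y i ω = 1 := by
    intro i; unfold indLE; split <;> simp
  have hSI : ∑ i ∈ Finset.range N, indLE Y y i ω = N * empDF Y y N ω := by
    rw [empDF, ← mul_assoc, mul_inv_cancel₀ hNR.ne', one_mul]
  have hB : (∑ j ∈ Finset.range N, (1 - incl X n N j ω) * (indLE Y y j ω - empDF Y y N ω))
      = (n N : ℝ) * empDF Y y N ω -
          (n N : ℝ) / (∑ i ∈ Finset.range N, X i ω) *
            ∑ i ∈ Finset.range N, X i ω * indLE Y y i ω := by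
    have h1 : ∀ j ∈ Finset.range N, (1 - incl X n N j ω) * (indLE Y y j ω - empDF Y y N ω)
        = (indLE Y y j ω - empDF Y y N ω)
          - ((n N : ℝ) / (∑ i ∈ Finset.range N, X i ω)) * (X j ω * indLE Y y j ω)
          + ((n N : ℝ) / (∑ i ∈ Finset.range N, X i ω)) * empDF Y y N ω * X j ω := by
      intro j _
      rw [incl]
      field_simp
      ring
    rw [Finset.sum_congr rfl h1, Finset.sum_add_distrib, Finset.sum_sub_distrib,
        Finset.sum_sub_distrib, ← Finset.mul_sum, ← Finset.mul_sum, hSI,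
        Finset.sum_const, Finset.card_range, nsmul_eq_mul]
    field_simp
    ring
  have hC : (∑ j ∈ Finset.range N, incl X n N j ω * (1 - incl X n N j ω))
      = (n N : ℝ) - ((n N : ℝ) / (∑ i ∈ Finset.range N, X i ω)) ^ 2 *
          ∑ i ∈ Finset.range N, X i ω ^ 2 := by
    have h1 : ∀ j ∈ Finset.range N, incl X n N j ω * (1 - incl X n N j ω)
        = ((n N : ℝ) / (∑ i ∈ Finset.range N, X i ω)) * X j ω
          - ((n N : ℝ) / (∑ i ∈ Finset.range N, X i ω)) ^ 2 * X j ω ^ 2 := by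
      intro j _
      rw [incl]
      field_simp
    rw [Finset.sum_congr rfl h1, Finset.sum_sub_distrib, ← Finset.mul_sum, ← Finset.mul_sum]
    field_simp
  -- main expansion
  have key : SN2 Y X n y N ω =
      (∑ i ∈ Finset.range N, (((incl X n N i ω)⁻¹ - 1) * (indLE Y y i ω - empDF Y y N ω) ^ 2))
        - (∑ j ∈ Finset.range N, (1 - incl X n N j ω) * (indLE Y y j ω - empDF Y y N ω)) *
          ((∑ j ∈ Finset.range N, (1 - incl X n N j ω) * (indLE Y y j ω - empDF Y y N ω)) /
            (∑ j ∈ Finset.range N, incl X n N j ω * (1 - incl X n N j ω))) := by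
    set B := ∑ j ∈ Finset.range N, (1 - incl X n N j ω) * (indLE Y y j ω - empDF Y y N ω) with hBdef
    set C := ∑ j ∈ Finset.range N, incl X n N j ω * (1 - incl X n N j ω) with hCdef
    set R := B / C with hRdef
    have h1 : ∀ i ∈ Finset.range N, ((incl X n N i ω)⁻¹ - 1) * (Zin Y X n y i N ω) ^ 2
        = ((incl X n N i ω)⁻¹ - 1) * (indLE Y y i ω - empDF Y y N ω) ^ 2
          - (2 * R) * ((1 - incl X n N i ω) * (indLE Y y i ω - empDF Y y N ω))
          + R ^ 2 * (incl X n N i ω * (1 - incl X n N i ω)) := by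
      intro i _
      have hπ : incl X n N i ω ≠ 0 := by
        rw [incl]; exact ne_of_gt (div_pos (mul_pos hnR (hX i)) hS)
      rw [Zin, ← hBdef, ← hCdef, mul_div_assoc, ← hRdef]
      field_simp
      ring
    rw [SN2, Finset.sum_congr rfl h1, Finset.sum_add_distrib, Finset.sum_sub_distrib,
        ← Finset.mul_sum, ← Finset.mul_sum, ← hBdef, ← hCdef]
    by_cases hC0 : C = 0
    · simp [hRdef, hC0]
    · rw [hRdef]
      field_simp
      ring
  -- the first sum
  have hA : (∑ i ∈ Finset.range N, (((incl X n N i ω)⁻¹ - 1) * (indLE Y y i ω - empDF Y y N ω) ^ 2))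
      = ((∑ i ∈ Finset.range N, X i ω) / (n N : ℝ)) *
          ((1 - 2 * empDF Y y N ω) * (∑ i ∈ Finset.range N, (X i ω)⁻¹ * indLE Y y i ω)
            + empDF Y y N ω ^ 2 * ∑ i ∈ Finset.range N, (X i ω)⁻¹)
        - (N : ℝ) * empDF Y y N ω * (1 - empDF Y y N ω) := by
    have h1 : ∀ i ∈ Finset.range N, ((incl X n N i ω)⁻¹ - 1) * (indLE Y y i ω - empDF Y y N ω) ^ 2
        = ((∑ i ∈ Finset.range N, X i ω) / (n N : ℝ)) *
            ((1 - 2 * empDF Y y N ω) * ((X i ω)⁻¹ * indLE Y y i ω)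
              + empDF Y y N ω ^ 2 * (X i ω)⁻¹)
          - ((1 - 2 * empDF Y y N ω) * indLE Y y i ω + empDF Y y N ω ^ 2) := by
      intro i _
      have hx := (hX i).ne'
      rcases hIv i with h | h <;>
        · rw [incl, h]
          field_simp
          ring
    rw [Finset.sum_congr rfl h1]
    simp only [Finset.sum_add_distrib, Finset.sum_sub_distrib, ← Finset.mul_sum,
      Finset.sum_const, Finset.card_range, nsmul_eq_mul, hSI]
    ring
  rw [key, hA, hB, hC]

/-- Lemma 3, second statement (eq. limite_s2n): a.s. limit of `S_N²(y)/N`. -/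
theorem stmt_5
    {Ω : Type*} [MeasurableSpace Ω] (P : Measure Ω) [IsProbabilityMeasure P]
    (Y X : ℕ → Ω → ℝ)
    (hmeas : ∀ i, Measurable fun ω => (Y i ω, X i ω))
    (hindep : iIndepFun (fun i ω => (Y i ω, X i ω)) P)
    (hident : ∀ i, IdentDistrib (fun ω => (Y i ω, X i ω)) (fun ω => (Y 0 ω, X 0 ω)) P P)
    (hpos : ∀ i, ∀ᵐ ω ∂P, 0 < X i ω)
    (hm2 : Integrable (fun ω => X 0 ω ^ 2) P)
    (hminv : Integrable (fun ω => (X 0 ω)⁻¹) P)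
    (n : ℕ → ℕ) (f : ℝ) (hf0 : 0 < f) (hf1 : f < 1)
    (hfN : Tendsto (fun N : ℕ => (n N : ℝ) / N) atTop (𝓝 f))
    (d : ℝ)
    (hd : d = f * (1 - (∫ ω, X 0 ω ^ 2 ∂P) / (∫ ω, X 0 ω ∂P) ^ 2) +
        f * (1 - f) * ((∫ ω, X 0 ω ^ 2 ∂P) / (∫ ω, X 0 ω ∂P) ^ 2))
    (hdpos : 0 < d) :
    ∀ y : ℝ, ∀ᵐ ω ∂P,
      Tendsto (fun N : ℕ => SN2 Y X n y N ω / N) atTop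
        (𝓝 (((∫ ω, X 0 ω ∂P) / f * (∫ ω, (X 0 ω)⁻¹ * indLE Y y 0 ω ∂P) -
              (P {ω | Y 0 ω ≤ y}).toReal) * (1 - (P {ω | Y 0 ω ≤ y}).toReal) -
            (∫ ω, X 0 ω ∂P) / f *
              ((∫ ω, (X 0 ω)⁻¹ * indLE Y y 0 ω ∂P) -
                (∫ ω, (X 0 ω)⁻¹ ∂P) * (P {ω | Y 0 ω ≤ y}).toReal) *
              (P {ω | Y 0 ω ≤ y}).toReal -
            f ^ 2 / d *
              ((P {ω | Y 0 ω ≤ y}).toReal -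
                (∫ ω, X 0 ω * indLE Y y 0 ω ∂P) / ∫ ω, X 0 ω ∂P) ^ 2)) := by
  intro y
  have hY0m : Measurable (Y 0) := (hmeas 0).fst
  have hX0m : Measurable (X 0) := (hmeas 0).snd
  have hintX : Integrable (X 0) P := by
    refine ((integrable_const (1:ℝ)).add hm2).mono' hX0m.aestronglyMeasurable ?_
    filter_upwards with ω
    have h1 : |X 0 ω| ≤ 1 + X 0 ω ^ 2 := by nlinarith [abs_nonneg (X 0 ω), sq_abs (X 0 ω)]
    simpa [Real.norm_eq_abs] using h1
  have hμpos : 0 < ∫ ω, X 0 ω ∂P := by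
    rw [integral_pos_iff_support_of_nonneg_ae ((hpos 0).mono fun ω h => h.le) hintX]
    have h0 : P {ω | ¬ 0 < X 0 ω} = 0 := by
      have := hpos 0; rw [MeasureTheory.ae_iff] at this; exact this
    have hc : P (Function.support (X 0))ᶜ = 0 := by
      refine measure_mono_null ?_ h0
      intro ω hω
      simp only [Set.mem_compl_iff, Function.mem_support, not_not] at hω
      simp [hω]
    have hms : MeasurableSet (Function.support (X 0)) := by
      rw [Function.support_eq_preimage]
      exact hX0m (measurableSet_singleton 0).compl
    rw [(prob_compl_eq_zero_iff hms).mp hc]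
    norm_num
  have hgI : Measurable (fun p : ℝ × ℝ => if p.1 ≤ y then (1:ℝ) else 0) :=
    Measurable.ite (measurableSet_le measurable_fst measurable_const)
      measurable_const measurable_const
  have hIval : ∀ i (ω : Ω), indLE Y y i ω = 0 ∨ indLE Y y i ω = 1 := by
    intro i ω; rw [indLE]; split <;> simp
  have hintI : Integrable (fun ω => indLE Y y 0 ω) P := by
    refine (integrable_const (1:ℝ)).mono' (hgI.comp (hmeas 0)).aestronglyMeasurable ?_
    filter_upwards with ω
    rcases hIval 0 ω with h | h <;> rw [h] <;> norm_num
  have hintXI : Integrable (fun ω => X 0 ω * indLE Y y 0 ω) P := by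
    refine ((integrable_const (1:ℝ)).add hm2).mono'
      ((measurable_snd.mul hgI).comp (hmeas 0)).aestronglyMeasurable ?_
    filter_upwards with ω
    simp only [Pi.add_apply]
    rcases hIval 0 ω with h | h
    · rw [h, mul_zero, norm_zero]; positivity
    · rw [h, mul_one, Real.norm_eq_abs]
      nlinarith [abs_nonneg (X 0 ω), sq_abs (X 0 ω)]
  have hintXiI : Integrable (fun ω => (X 0 ω)⁻¹ * indLE Y y 0 ω) P := by
    refine hminv.abs.mono'
      ((measurable_snd.inv.mul hgI).comp (hmeas 0)).aestronglyMeasurable ?_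
    filter_upwards with ω
    rcases hIval 0 ω with h | h
    · rw [h, mul_zero, norm_zero]; positivity
    · rw [h, mul_one, Real.norm_eq_abs]
  have e4 : (∫ ω, indLE Y y 0 ω ∂P) = (P {ω | Y 0 ω ≤ y}).toReal := by
    have hfun : (fun ω => indLE Y y 0 ω) = Set.indicator {ω | Y 0 ω ≤ y} (fun _ => (1:ℝ)) := by
      ext ω
      by_cases h : Y 0 ω ≤ y <;> simp [indLE, Set.indicator_apply, h]
    rw [hfun, integral_indicator_const (1:ℝ) (measurableSet_le hY0m measurable_const),
      smul_eq_mul, mul_one]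
    rfl
  have H1 := slln_pair' Y X hindep hident (fun p => p.2) measurable_snd
      (fun i ω => X i ω) (fun i => rfl) hintX (∫ ω, X 0 ω ∂P) rfl
  have H2 := slln_pair' Y X hindep hident (fun p => p.2 ^ 2) (measurable_snd.pow_const 2)
      (fun i ω => X i ω ^ 2) (fun i => rfl) hm2 (∫ ω, X 0 ω ^ 2 ∂P) rfl
  have H3 := slln_pair' Y X hindep hident (fun p => p.2⁻¹) measurable_snd.inv
      (fun i ω => (X i ω)⁻¹) (fun i => rfl) hminv (∫ ω, (X 0 ω)⁻¹ ∂P) rfl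
  have H4 := slln_pair' Y X hindep hident (fun p : ℝ × ℝ => if p.1 ≤ y then (1:ℝ) else 0) hgI
      (fun i ω => indLE Y y i ω) (fun i => rfl) hintI _ e4
  have H5 := slln_pair' Y X hindep hident (fun p => p.2 * (if p.1 ≤ y then (1:ℝ) else 0))
      (measurable_snd.mul hgI) (fun i ω => X i ω * indLE Y y i ω) (fun i => rfl) hintXI
      (∫ ω, X 0 ω * indLE Y y 0 ω ∂P) rfl
  have H6 := slln_pair' Y X hindep hident (fun p => p.2⁻¹ * (if p.1 ≤ y then (1:ℝ) else 0))
      (measurable_snd.inv.mul hgI) (fun i ω => (X i ω)⁻¹ * indLE Y y i ω) (fun i => rfl) hintXiI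
      (∫ ω, (X 0 ω)⁻¹ * indLE Y y 0 ω ∂P) rfl
  have hnn : ∀ᶠ N : ℕ in atTop, 0 < n N := by
    filter_upwards [hfN.eventually (eventually_gt_nhds hf0), eventually_ge_atTop 1]
      with N hN hN1
    by_contra hcon
    have h0 : n N = 0 := by omega
    rw [h0] at hN
    norm_num at hN
  have hμne : (∫ ω, X 0 ω ∂P) ≠ 0 := ne_of_gt hμpos
  have hccd : f - (f / ∫ ω, X 0 ω ∂P) ^ 2 * ∫ ω, X 0 ω ^ 2 ∂P = d := by
    rw [hd]; ring
  filter_upwards [H1, H2, H3, H4, H5, H6, ae_all_iff.mpr hpos]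
    with ω h1 h2 h3 h4 h5 h6 hx
  have hev : ∀ᶠ N : ℕ in atTop, SN2 Y X n y N ω / N =
      (((∑ i ∈ Finset.range N, X i ω) / N) / ((n N : ℝ) / N)) *
          ((1 - 2 * ((∑ i ∈ Finset.range N, indLE Y y i ω) / N)) *
              ((∑ i ∈ Finset.range N, (X i ω)⁻¹ * indLE Y y i ω) / N) +
            ((∑ i ∈ Finset.range N, indLE Y y i ω) / N) ^ 2 *
              ((∑ i ∈ Finset.range N, (X i ω)⁻¹) / N)) -
        ((∑ i ∈ Finset.range N, indLE Y y i ω) / N) *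
          (1 - (∑ i ∈ Finset.range N, indLE Y y i ω) / N) -
        (((n N : ℝ) / N) * ((∑ i ∈ Finset.range N, indLE Y y i ω) / N) -
            (((n N : ℝ) / N) / ((∑ i ∈ Finset.range N, X i ω) / N)) *
              ((∑ i ∈ Finset.range N, X i ω * indLE Y y i ω) / N)) *
          ((((n N : ℝ) / N) * ((∑ i ∈ Finset.range N, indLE Y y i ω) / N) -
              (((n N : ℝ) / N) / ((∑ i ∈ Finset.range N, X i ω) / N)) *
                ((∑ i ∈ Finset.range N, X i ω * indLE Y y i ω) / N)) /
            (((n N : ℝ) / N) -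
              (((n N : ℝ) / N) / ((∑ i ∈ Finset.range N, X i ω) / N)) ^ 2 *
                ((∑ i ∈ Finset.range N, X i ω ^ 2) / N))) := by
    filter_upwards [hnn, eventually_ge_atTop 1] with N hn1 hN1
    have hNpos : 0 < N := hN1
    have hNR : ((N : ℝ)) ≠ 0 := Nat.cast_ne_zero.mpr (by omega)
    have hnR : ((n N : ℝ)) ≠ 0 := Nat.cast_ne_zero.mpr (by omega)
    have hSpos : 0 < ∑ i ∈ Finset.range N, X i ω :=
      Finset.sum_pos (fun i _ => hx i) ⟨0, Finset.mem_range.mpr hNpos⟩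
    have hE : empDF Y y N ω = (∑ i ∈ Finset.range N, indLE Y y i ω) / N := by
      rw [empDF, inv_mul_eq_div]
    rw [SN2_eq Y X n y N ω hNpos hn1 hx, hE]
    exact alg_aux N (n N) _ _ _ _ _ _ hNR hnR (ne_of_gt hSpos)
  have hrs : Tendsto (fun N : ℕ => ((n N : ℝ) / N) / ((∑ i ∈ Finset.range N, X i ω) / N))
      atTop (𝓝 (f / ∫ ω, X 0 ω ∂P)) := hfN.div h1 hμne
  have hbb := (hfN.mul h4).sub (hrs.mul h5)
  have hcc := hfN.sub ((hrs.pow 2).mul h2)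
  rw [hccd] at hcc
  have hT := (((h1.div hfN (ne_of_gt hf0)).mul
      ((((tendsto_const_nhds : Tendsto (fun _ : ℕ => (1:ℝ)) atTop (𝓝 1)).sub
          (h4.const_mul 2)).mul h6).add ((h4.pow 2).mul h3))).sub
      (h4.mul ((tendsto_const_nhds : Tendsto (fun _ : ℕ => (1:ℝ)) atTop (𝓝 1)).sub h4))).sub
      (hbb.mul (hbb.div hcc (ne_of_gt hdpos)))
  have hfin := Tendsto.congr' (hev.mono fun N h => h.symm) hT
  convert hfin using 2
  field_simp
  ring
end

section
/- Let C > 0 and B > 0. For each N, let π_{1,N}, …, π_{N,N} ∈ (0,1] be deterministic numbers with N⁻¹∑_{i=1}^N π_{i,N}⁻¹ ≤ B, and let D_{1,N}, …, D_{N,N} be {0,1}-valued random variables with 𝔼[D_{i,N}] = π_{i,N} and such that the second-order moments π_{ij} := 𝔼[D_{i,N} D_{j,N}] satisfy |π_{ij} − π_{i,N}π_{j,N}| ≤ (C/N)·π_{i,N}π_{j,N} for all i ≠ j. Then N⁻¹∑_{i=1}^N D_{i,N}/π_{i,N} → 1 in probability as N → ∞. (Lemma of the paper (Lemma 5b): design-based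 law of large numbers for high-entropy designs, whose second-order inclusion probabilities satisfy the Hájek bound.) -/
open MeasureTheory ProbabilityTheory Filter Topology

/-- Lemma 5b of the paper: design-based law of large numbers for high-entropy designs.
Under the Hájek covariance bound `|π_{ij} − πᵢπⱼ| ≤ (C/N) πᵢπⱼ` and boundedness of
`N⁻¹ ∑ᵢ πᵢ⁻¹`, the Horvitz–Thompson count `N⁻¹ ∑ᵢ Dᵢ/πᵢ` tends to `1` in probability. -/
theorem stmt_8
    {Ω : Type*} [MeasurableSpace Ω] (P : Measure Ω) [IsProbabilityMeasure P]
    (C B : ℝ) (hC : 0 < C) (hB : 0 < B)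
    (π : ℕ → ℕ → ℝ) (D : ℕ → ℕ → Ω → ℝ)
    (hπ : ∀ N, ∀ i < N, 0 < π N i ∧ π N i ≤ 1)
    (hπB : ∀ N : ℕ, 0 < N → (N : ℝ)⁻¹ * ∑ i ∈ Finset.range N, (π N i)⁻¹ ≤ B)
    (hD01 : ∀ N i ω, D N i ω = 0 ∨ D N i ω = 1)
    (hDmeas : ∀ N i, Measurable (D N i))
    (hmean : ∀ N, ∀ i < N, ∫ ω, D N i ω ∂P = π N i)
    (hcov : ∀ N, ∀ i < N, ∀ j < N, i ≠ j →
      |(∫ ω, D N i ω * D N j ω ∂P) - π N i * π N j| ≤ C / N * (π N i * π N j)) :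
    ∀ ε > (0 : ℝ),
      Tendsto (fun N : ℕ =>
          P {ω | ε ≤ |(N : ℝ)⁻¹ * (∑ i ∈ Finset.range N, D N i ω / π N i) - 1|}) atTop
        (𝓝 0) := by
  intro ε hε
  -- integrability of D and products
  have hDint : ∀ N i, Integrable (D N i) P := fun N i =>
    (integrable_const (1:ℝ)).mono' (hDmeas N i).aestronglyMeasurable
      (Filter.Eventually.of_forall fun ω => by
        rcases hD01 N i ω with h | h <;> simp [h])
  have hDDint : ∀ N i j, Integrable (fun ω => D N i ω * D N j ω) P := fun N i j =>
    (integrable_const (1:ℝ)).mono' ((hDmeas N i).mul (hDmeas N j)).aestronglyMeasurable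
      (Filter.Eventually.of_forall fun ω => by
        rcases hD01 N i ω with h | h <;> rcases hD01 N j ω with h' | h' <;> simp [h, h'])
  -- centered variables
  set f : ℕ → ℕ → Ω → ℝ := fun N i ω => D N i ω * (π N i)⁻¹ - 1 with hf
  have hffeq : ∀ N i j, (fun ω => f N i ω * f N j ω) =
      fun ω => D N i ω * D N j ω * ((π N i)⁻¹ * (π N j)⁻¹)
        - D N i ω * (π N i)⁻¹ - D N j ω * (π N j)⁻¹ + 1 := by
    intro N i j; funext ω; simp only [hf]; ring
  have hffint : ∀ N i j, Integrable (fun ω => f N i ω * f N j ω) P := by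
    intro N i j
    rw [hffeq]
    exact ((((hDDint N i j).mul_const _).sub ((hDint N i).mul_const _)).sub
      ((hDint N j).mul_const _)).add (integrable_const 1)
  -- integral of cross products
  have hffint_eq : ∀ N, ∀ i < N, ∀ j < N,
      ∫ ω, f N i ω * f N j ω ∂P =
        (∫ ω, D N i ω * D N j ω ∂P) * ((π N i)⁻¹ * (π N j)⁻¹) - 1 := by
    intro N i hi j hj
    have h1 := (hπ N i hi).1
    have h2 := (hπ N j hj).1
    have I1 : Integrable (fun ω => D N i ω * D N j ω * ((π N i)⁻¹ * (π N j)⁻¹)) P :=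
      (hDDint N i j).mul_const _
    have I2 : Integrable (fun ω => D N i ω * (π N i)⁻¹) P := (hDint N i).mul_const _
    have I3 : Integrable (fun ω => D N j ω * (π N j)⁻¹) P := (hDint N j).mul_const _
    have I12 : Integrable (fun ω => D N i ω * D N j ω * ((π N i)⁻¹ * (π N j)⁻¹)
        - D N i ω * (π N i)⁻¹) P := I1.sub I2
    have I123 : Integrable (fun ω => D N i ω * D N j ω * ((π N i)⁻¹ * (π N j)⁻¹)
        - D N i ω * (π N i)⁻¹ - D N j ω * (π N j)⁻¹) P := I12.sub I3
    rw [hffeq, integral_add I123 (integrable_const 1), integral_sub I12 I3,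
      integral_sub I1 I2, integral_mul_const, integral_mul_const, integral_mul_const,
      hmean N i hi, hmean N j hj, integral_const]
    simp [mul_inv_cancel₀ h1.ne', mul_inv_cancel₀ h2.ne']
  -- bound each term
  have hbound : ∀ N, ∀ i < N, ∀ j < N,
      ∫ ω, f N i ω * f N j ω ∂P ≤ if i = j then (π N i)⁻¹ else C / N := by
    intro N i hi j hj
    have h1 := (hπ N i hi).1
    have h2 := (hπ N j hj).1
    rw [hffint_eq N i hi j hj]
    by_cases hij : i = j
    · subst hij
      rw [if_pos rfl]
      have hDsq : (fun ω => D N i ω * D N i ω) = D N i := by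
        funext ω; rcases hD01 N i ω with h | h <;> simp [h]
      rw [hDsq, hmean N i hi]
      have : π N i * ((π N i)⁻¹ * (π N i)⁻¹) = (π N i)⁻¹ := by
        field_simp
      rw [this]
      linarith
    · rw [if_neg hij]
      have hc := hcov N i hi j hj hij
      have habs : (∫ ω, D N i ω * D N j ω ∂P) - π N i * π N j
          ≤ C / N * (π N i * π N j) := (abs_le.mp hc).2
      have hππ : 0 < π N i * π N j := mul_pos h1 h2
      have key : (∫ ω, D N i ω * D N j ω ∂P) * ((π N i)⁻¹ * (π N j)⁻¹) - 1
          = ((∫ ω, D N i ω * D N j ω ∂P) - π N i * π N j) * (π N i * π N j)⁻¹ := by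
        field_simp
      rw [key]
      calc ((∫ ω, D N i ω * D N j ω ∂P) - π N i * π N j) * (π N i * π N j)⁻¹
          ≤ C / N * (π N i * π N j) * (π N i * π N j)⁻¹ :=
            mul_le_mul_of_nonneg_right habs (inv_nonneg.mpr hππ.le)
        _ = C / N := by rw [mul_assoc, mul_inv_cancel₀ hππ.ne', mul_one]
  -- centering identity
  have hcenter : ∀ N : ℕ, 0 < N → ∀ ω,
      (N : ℝ)⁻¹ * (∑ i ∈ Finset.range N, D N i ω / π N i) - 1
        = (N:ℝ)⁻¹ * ∑ i ∈ Finset.range N, f N i ω := by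
    intro N hN ω
    have hNR : (0:ℝ) < N := Nat.cast_pos.mpr hN
    have hsub : ∑ i ∈ Finset.range N, f N i ω
        = (∑ i ∈ Finset.range N, D N i ω / π N i) - N := by
      simp only [hf, Finset.sum_sub_distrib, Finset.sum_const, Finset.card_range,
        nsmul_eq_mul, mul_one, div_eq_mul_inv]
    rw [hsub, mul_sub, inv_mul_cancel₀ hNR.ne']
  -- expansion of the square
  have hsq : ∀ N : ℕ, 0 < N →
      (fun ω => ((N : ℝ)⁻¹ * (∑ i ∈ Finset.range N, D N i ω / π N i) - 1)^2)
        = fun ω => (N:ℝ)⁻¹ * ((N:ℝ)⁻¹ *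
          ∑ i ∈ Finset.range N, ∑ j ∈ Finset.range N, f N i ω * f N j ω) := by
    intro N hN
    funext ω
    rw [hcenter N hN ω, ← Finset.sum_mul_sum]
    ring
  -- second moment bound
  have hsecond : ∀ N : ℕ, 0 < N →
      ∫ ω, ((N : ℝ)⁻¹ * (∑ i ∈ Finset.range N, D N i ω / π N i) - 1)^2 ∂P
        ≤ (B + C) / N := by
    intro N hN
    have hNR : (0:ℝ) < N := Nat.cast_pos.mpr hN
    rw [show (∫ ω, ((N : ℝ)⁻¹ * (∑ i ∈ Finset.range N, D N i ω / π N i) - 1)^2 ∂P)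
        = ∫ ω, (N:ℝ)⁻¹ * ((N:ℝ)⁻¹ *
          ∑ i ∈ Finset.range N, ∑ j ∈ Finset.range N, f N i ω * f N j ω) ∂P from by
      exact congrArg (fun h => ∫ ω, h ω ∂P) (hsq N hN)]
    rw [integral_const_mul, integral_const_mul,
      integral_finset_sum _ (fun i _ =>
        integrable_finset_sum _ (fun j _ => hffint N i j))]
    have hcongr : ∀ i ∈ Finset.range N, ∫ ω, ∑ j ∈ Finset.range N, f N i ω * f N j ω ∂P
        = ∑ j ∈ Finset.range N, ∫ ω, f N i ω * f N j ω ∂P := fun i _ =>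
      integral_finset_sum _ (fun j _ => hffint N i j)
    rw [Finset.sum_congr rfl hcongr]
    have hsum : ∑ i ∈ Finset.range N, ∑ j ∈ Finset.range N, ∫ ω, f N i ω * f N j ω ∂P
        ≤ ∑ i ∈ Finset.range N, ∑ j ∈ Finset.range N,
            (if i = j then (π N i)⁻¹ else C / N) := by
      refine Finset.sum_le_sum fun i hi => Finset.sum_le_sum fun j hj => ?_
      exact hbound N i (Finset.mem_range.mp hi) j (Finset.mem_range.mp hj)
    have hsum2 : ∑ i ∈ Finset.range N, ∑ j ∈ Finset.range N,
        (if i = j then (π N i)⁻¹ else C / N) ≤ N * B + N * C := by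
      have hrow : ∀ i ∈ Finset.range N, ∑ j ∈ Finset.range N,
          (if i = j then (π N i)⁻¹ else C / N) ≤ (π N i)⁻¹ + N * (C / N) := by
        intro i hmem
        have hterm : ∀ j, (if i = j then (π N i)⁻¹ else C / N)
            ≤ (if i = j then (π N i)⁻¹ else 0) + C / N := by
          intro j
          by_cases h : i = j
          · rw [if_pos h, if_pos h]
            have : (0:ℝ) ≤ C / N := by positivity
            linarith
          · rw [if_neg h, if_neg h, zero_add]
        calc ∑ j ∈ Finset.range N, (if i = j then (π N i)⁻¹ else C / N)
            ≤ ∑ j ∈ Finset.range N, ((if i = j then (π N i)⁻¹ else 0) + C / N) :=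
              Finset.sum_le_sum fun j _ => hterm j
          _ = (π N i)⁻¹ + N * (C / N) := by
              rw [Finset.sum_add_distrib, Finset.sum_ite_eq, if_pos hmem,
                Finset.sum_const, Finset.card_range, nsmul_eq_mul]
      calc ∑ i ∈ Finset.range N, ∑ j ∈ Finset.range N,
            (if i = j then (π N i)⁻¹ else C / N)
          ≤ ∑ i ∈ Finset.range N, ((π N i)⁻¹ + N * (C / N)) := Finset.sum_le_sum hrow
        _ = (∑ i ∈ Finset.range N, (π N i)⁻¹) + N * (N * (C / N)) := by
            rw [Finset.sum_add_distrib, Finset.sum_const, Finset.card_range, nsmul_eq_mul]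
        _ ≤ N * B + N * C := by
            have h1 : (∑ i ∈ Finset.range N, (π N i)⁻¹) ≤ N * B := by
              have h := hπB N hN
              rw [inv_mul_le_iff₀ hNR] at h
              exact h
            have h2 : (N:ℝ) * (N * (C / N)) = N * C := by field_simp
            linarith
    have hfinal : ∑ i ∈ Finset.range N, ∑ j ∈ Finset.range N, ∫ ω, f N i ω * f N j ω ∂P
        ≤ N * (B + C) := by
      calc _ ≤ (N:ℝ) * B + N * C := le_trans hsum hsum2
        _ = N * (B + C) := by ring
    calc (N:ℝ)⁻¹ * ((N:ℝ)⁻¹ *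
          ∑ i ∈ Finset.range N, ∑ j ∈ Finset.range N, ∫ ω, f N i ω * f N j ω ∂P)
        ≤ (N:ℝ)⁻¹ * ((N:ℝ)⁻¹ * (N * (B + C))) := by
          apply mul_le_mul_of_nonneg_left _ (by positivity)
          exact mul_le_mul_of_nonneg_left hfinal (by positivity)
      _ = (B + C) / N := by field_simp
  -- Markov inequality
  have hmarkov : ∀ N : ℕ, 0 < N →
      P {ω | ε ≤ |(N : ℝ)⁻¹ * (∑ i ∈ Finset.range N, D N i ω / π N i) - 1|}
        ≤ ENNReal.ofReal ((B + C) / (N * ε^2)) := by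
    intro N hN
    have hNR : (0:ℝ) < N := Nat.cast_pos.mpr hN
    set g : Ω → ℝ := fun ω => ((N : ℝ)⁻¹ * (∑ i ∈ Finset.range N, D N i ω / π N i) - 1)^2
      with hg
    have hgint : Integrable g P := by
      rw [hg, hsq N hN]
      exact ((integrable_finset_sum _ (fun i _ =>
        integrable_finset_sum _ (fun j _ => hffint N i j))).const_mul _).const_mul _
    have hset : {ω | ε ≤ |(N : ℝ)⁻¹ * (∑ i ∈ Finset.range N, D N i ω / π N i) - 1|}
        = {ω | ε^2 ≤ g ω} := by
      ext ω
      simp only [Set.mem_setOf_eq, hg]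
      constructor
      · intro h
        nlinarith [sq_abs ((N : ℝ)⁻¹ * (∑ i ∈ Finset.range N, D N i ω / π N i) - 1),
          abs_nonneg ((N : ℝ)⁻¹ * (∑ i ∈ Finset.range N, D N i ω / π N i) - 1)]
      · intro h
        nlinarith [sq_abs ((N : ℝ)⁻¹ * (∑ i ∈ Finset.range N, D N i ω / π N i) - 1),
          abs_nonneg ((N : ℝ)⁻¹ * (∑ i ∈ Finset.range N, D N i ω / π N i) - 1)]
    rw [hset]
    have hmv := mul_meas_ge_le_integral_of_nonneg
      (Filter.Eventually.of_forall (fun ω => sq_nonneg _ : ∀ ω, 0 ≤ g ω)) hgint (ε^2)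
    have h2 : ε^2 * (P {ω | ε^2 ≤ g ω}).toReal ≤ (B + C) / N :=
      le_trans hmv (hsecond N hN)
    have ht : (P {ω | ε^2 ≤ g ω}).toReal ≤ (B + C) / N / ε^2 := by
      rw [le_div_iff₀ (by positivity : (0:ℝ) < ε^2), mul_comm]
      exact h2
    have hdd : (B + C) / (N:ℝ) / ε ^ 2 = (B + C) / ((N:ℝ) * ε ^ 2) := div_div _ _ _
    calc P {ω | ε^2 ≤ g ω} = ENNReal.ofReal ((P {ω | ε^2 ≤ g ω}).toReal) := by
          rw [ENNReal.ofReal_toReal (measure_ne_top P _)]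
      _ ≤ ENNReal.ofReal ((B + C) / (N * ε^2)) :=
          ENNReal.ofReal_le_ofReal (hdd ▸ ht)
  -- squeeze
  have hub : Tendsto (fun N : ℕ => ENNReal.ofReal ((B + C) / (N * ε^2))) atTop (𝓝 0) := by
    have hre : Tendsto (fun N : ℕ => (B + C) / (N * ε^2)) atTop (𝓝 0) := by
      have h1 : (fun N : ℕ => (B + C) / ((N:ℝ) * ε^2)) =
          fun N : ℕ => ((B + C) / ε^2) * (N:ℝ)⁻¹ := by
        funext N
        rw [mul_comm (N:ℝ) (ε^2), ← div_div, div_eq_mul_inv]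
      rw [h1]
      have h2 : Tendsto (fun N : ℕ => ((N:ℝ))⁻¹) atTop (𝓝 0) :=
        tendsto_inv_atTop_zero.comp tendsto_natCast_atTop_atTop
      simpa using h2.const_mul ((B + C) / ε^2)
    simpa using ENNReal.tendsto_ofReal hre
  apply tendsto_of_tendsto_of_tendsto_of_le_of_le' tendsto_const_nhds hub
  · exact Filter.Eventually.of_forall (fun N => zero_le)
  · filter_upwards [eventually_gt_atTop 0] with N hN
    exact hmarkov N hN
end

section
/- For every fixed y ∈ ℝ, as N → ∞, B_{1,N}(y) := N⁻¹ ∑_{i=1}^N (π_i⁻¹ − 1)(1{Y_i ≤ y} − F_N(y))² converges ℙ-almost surely to ((𝔼[X₁]/f)·k₋₁(y) − F(y))·(1 − F(y)) − (𝔼[X₁]/f)·(k₋₁(y) − 𝔼[X₁⁻¹]·F(y))·F(y), where k₋₁(y) = 𝔼[X₁⁻¹ 1{Y₁ ≤ y}]. (Auxiliary claim (limite_b1) in the proof of Lemma 3.) -/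
open MeasureTheory ProbabilityTheory Filter Topology

private lemma ind_sq (c : Prop) [Decidable c] :
    ((if c then (1:ℝ) else 0)) ^ 2 = (if c then (1:ℝ) else 0) := by
  split_ifs <;> norm_num

/-- Auxiliary claim (limite_b1) in the proof of Lemma 3: for every fixed `y`,
`B_{1,N}(y) = N⁻¹ ∑ᵢ (πᵢ⁻¹ − 1)(1{Yᵢ ≤ y} − F_N(y))²` converges a.s. to
`((𝔼[X₁]/f) k₋₁(y) − F(y))(1 − F(y)) − (𝔼[X₁]/f)(k₋₁(y) − 𝔼[X₁⁻¹] F(y)) F(y)`. -/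
theorem stmt_10
    {Ω : Type*} [MeasurableSpace Ω] (P : Measure Ω) [IsProbabilityMeasure P]
    (Y X : ℕ → Ω → ℝ)
    (hmeas : ∀ i, Measurable fun ω => (Y i ω, X i ω))
    (hindep : iIndepFun (fun i ω => (Y i ω, X i ω)) P)
    (hident : ∀ i, IdentDistrib (fun ω => (Y i ω, X i ω)) (fun ω => (Y 0 ω, X 0 ω)) P P)
    (hpos : ∀ i, ∀ᵐ ω ∂P, 0 < X i ω)
    (hm2 : Integrable (fun ω => X 0 ω ^ 2) P)
    (hminv : Integrable (fun ω => (X 0 ω)⁻¹) P)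
    (n : ℕ → ℕ) (f : ℝ) (hf0 : 0 < f) (hf1 : f < 1)
    (hfN : Tendsto (fun N : ℕ => (n N : ℝ) / N) atTop (𝓝 f)) :
    ∀ y : ℝ, ∀ᵐ ω ∂P,
      Tendsto (fun N : ℕ => (N : ℝ)⁻¹ * ∑ i ∈ Finset.range N,
          (((n N : ℝ) * X i ω / ∑ j ∈ Finset.range N, X j ω)⁻¹ - 1) *
            ((if Y i ω ≤ y then (1 : ℝ) else 0) -
              (N : ℝ)⁻¹ * ∑ k ∈ Finset.range N, if Y k ω ≤ y then (1 : ℝ) else 0) ^ 2) atTop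
        (𝓝 (((∫ ω, X 0 ω ∂P) / f *
                (∫ ω, (X 0 ω)⁻¹ * (if Y 0 ω ≤ y then (1 : ℝ) else 0) ∂P) -
              (P {ω | Y 0 ω ≤ y}).toReal) * (1 - (P {ω | Y 0 ω ≤ y}).toReal) -
            (∫ ω, X 0 ω ∂P) / f *
              ((∫ ω, (X 0 ω)⁻¹ * (if Y 0 ω ≤ y then (1 : ℝ) else 0) ∂P) -
                (∫ ω, (X 0 ω)⁻¹ ∂P) * (P {ω | Y 0 ω ≤ y}).toReal) *
              (P {ω | Y 0 ω ≤ y}).toReal)) := by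
  intro y
  -- measurability of the coordinates
  have hY0 : Measurable (Y 0) := (measurable_fst.comp (hmeas 0))
  have hX0 : Measurable (X 0) := (measurable_snd.comp (hmeas 0))
  -- SLLN for any measurable function of the pair
  have slln : ∀ g : ℝ × ℝ → ℝ, Measurable g →
      Integrable (fun ω => g (Y 0 ω, X 0 ω)) P →
      ∀ᵐ ω ∂P, Tendsto (fun N : ℕ => (∑ i ∈ Finset.range N, g (Y i ω, X i ω)) / N) atTop
        (𝓝 (∫ ω, g (Y 0 ω, X 0 ω) ∂P)) := by
    intro g hg hint
    exact strong_law_ae_real (fun i ω => g (Y i ω, X i ω)) hint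
      (fun i j hij => (hindep.indepFun hij).comp hg hg)
      (fun i => (hident i).comp hg)
  -- the four functions
  have hgX : Measurable fun p : ℝ × ℝ => p.2 := measurable_snd
  have hgInv : Measurable fun p : ℝ × ℝ => (p.2)⁻¹ := measurable_snd.inv
  have hsetP : MeasurableSet {p : ℝ × ℝ | p.1 ≤ y} :=
    measurableSet_le measurable_fst measurable_const
  have hgI : Measurable fun p : ℝ × ℝ => (if p.1 ≤ y then (1:ℝ) else 0) :=
    Measurable.ite hsetP measurable_const measurable_const
  have hgIinv : Measurable fun p : ℝ × ℝ => (p.2)⁻¹ * (if p.1 ≤ y then (1:ℝ) else 0) :=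
    hgInv.mul hgI
  -- integrability
  have hintX : Integrable (X 0) P := by
    refine Integrable.mono' ((integrable_const (1:ℝ)).add hm2) hX0.aestronglyMeasurable ?_
    filter_upwards with ω
    have h := sq_nonneg (|X 0 ω| - 1)
    have h2 : |X 0 ω| ^ 2 = X 0 ω ^ 2 := sq_abs _
    simp only [Real.norm_eq_abs, Pi.add_apply]
    nlinarith [abs_nonneg (X 0 ω)]
  have hintI : Integrable (fun ω => (if Y 0 ω ≤ y then (1:ℝ) else 0)) P := by
    refine Integrable.mono' (integrable_const (1:ℝ))
      ((hgI.comp (hmeas 0)).aestronglyMeasurable) ?_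
    filter_upwards with ω
    simp only [Real.norm_eq_abs]
    split_ifs <;> norm_num
  have hintIinv : Integrable (fun ω => (X 0 ω)⁻¹ * (if Y 0 ω ≤ y then (1:ℝ) else 0)) P := by
    refine Integrable.mono' hminv.abs
      ((hgIinv.comp (hmeas 0)).aestronglyMeasurable) ?_
    filter_upwards with ω
    simp only [Real.norm_eq_abs, abs_mul]
    have : |if Y 0 ω ≤ y then (1:ℝ) else 0| ≤ 1 := by split_ifs <;> norm_num
    nlinarith [abs_nonneg ((X 0 ω)⁻¹), abs_nonneg (if Y 0 ω ≤ y then (1:ℝ) else 0)]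
  -- value of the integral of the indicator
  have hiI : ∫ ω, (if Y 0 ω ≤ y then (1:ℝ) else 0) ∂P = (P {ω | Y 0 ω ≤ y}).toReal := by
    have hs : MeasurableSet {ω | Y 0 ω ≤ y} := measurableSet_le hY0 measurable_const
    have : (fun ω => (if Y 0 ω ≤ y then (1:ℝ) else 0)) =
        Set.indicator {ω | Y 0 ω ≤ y} (fun _ => (1:ℝ)) := by
      ext ω; simp [Set.indicator_apply, Set.mem_setOf_eq]
    rw [this, integral_indicator_const (1:ℝ) hs]
    simp
    rfl
  -- apply SLLN four times
  have h1 := slln _ hgX hintX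
  have h2 := slln _ hgInv hminv
  have h3 := slln _ hgIinv hintIinv
  have h4 := slln _ hgI hintI
  rw [hiI] at h4
  -- eventual positivity of n N / N
  have hn : ∀ᶠ N : ℕ in atTop, (0:ℝ) < (n N : ℝ) / N := hfN.eventually (eventually_gt_nhds hf0)
  filter_upwards [h1, h2, h3, h4, ae_all_iff.2 hpos] with ω hA hB hC hD hXpos
  set μE := ∫ ω, X 0 ω ∂P
  set mE := ∫ ω, (X 0 ω)⁻¹ ∂P
  set kE := ∫ ω, (X 0 ω)⁻¹ * (if Y 0 ω ≤ y then (1:ℝ) else 0) ∂P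
  set FE := (P {ω | Y 0 ω ≤ y}).toReal with hFE
  -- limit of the algebraic combination
  have he : Tendsto (fun N : ℕ => ((n N : ℝ) / N)⁻¹) atTop (𝓝 f⁻¹) := hfN.inv₀ hf0.ne'
  have hlim : Tendsto (fun N : ℕ =>
      ((∑ i ∈ Finset.range N, X i ω) / N) * ((n N : ℝ) / N)⁻¹ *
        ((1 - 2 * ((∑ k ∈ Finset.range N, if Y k ω ≤ y then (1:ℝ) else 0) / N)) *
            ((∑ i ∈ Finset.range N, (X i ω)⁻¹ * (if Y i ω ≤ y then (1:ℝ) else 0)) / N) +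
          ((∑ k ∈ Finset.range N, if Y k ω ≤ y then (1:ℝ) else 0) / N) ^ 2 *
            ((∑ i ∈ Finset.range N, (X i ω)⁻¹) / N)) -
        ((1 - 2 * ((∑ k ∈ Finset.range N, if Y k ω ≤ y then (1:ℝ) else 0) / N)) *
            ((∑ k ∈ Finset.range N, if Y k ω ≤ y then (1:ℝ) else 0) / N) +
          ((∑ k ∈ Finset.range N, if Y k ω ≤ y then (1:ℝ) else 0) / N) ^ 2)) atTop
      (𝓝 (μE * f⁻¹ * ((1 - 2 * FE) * kE + FE ^ 2 * mE) - ((1 - 2 * FE) * FE + FE ^ 2))) := by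
    exact (((hA.mul he).mul
        (((tendsto_const_nhds.sub (hD.const_mul 2)).mul hC).add ((hD.pow 2).mul hB)))).sub
      (((tendsto_const_nhds.sub (hD.const_mul 2)).mul hD).add (hD.pow 2))
  have htarget :
      ((μE / f * kE - FE) * (1 - FE) - μE / f * (kE - mE * FE) * FE)
        = μE * f⁻¹ * ((1 - 2 * FE) * kE + FE ^ 2 * mE) - ((1 - 2 * FE) * FE + FE ^ 2) := by
    field_simp
    ring
  rw [htarget]
  refine Tendsto.congr' ?_ hlim
  filter_upwards [hn, eventually_ge_atTop 1] with N hnN hN1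
  have hNne : (N : ℝ) ≠ 0 := by positivity
  have hnne : (n N : ℝ) ≠ 0 := by
    intro h
    rw [h] at hnN
    simp at hnN
  have hSpos : 0 < ∑ j ∈ Finset.range N, X j ω :=
    Finset.sum_pos (fun i _ => hXpos i) (Finset.nonempty_range_iff.2 (by omega))
  have hSne : (∑ j ∈ Finset.range N, X j ω) ≠ 0 := hSpos.ne'
  set S := ∑ j ∈ Finset.range N, X j ω with hS
  set D := ∑ k ∈ Finset.range N, if Y k ω ≤ y then (1:ℝ) else 0 with hDdef
  set B := ∑ i ∈ Finset.range N, (X i ω)⁻¹ with hBdef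
  set C := ∑ i ∈ Finset.range N, (X i ω)⁻¹ * (if Y i ω ≤ y then (1:ℝ) else 0) with hCdef
  set d : ℝ := (N : ℝ)⁻¹ * D with hd
  -- per-term identity
  have key : ∀ i ∈ Finset.range N,
      (((n N : ℝ) * X i ω / S)⁻¹ - 1) *
          ((if Y i ω ≤ y then (1 : ℝ) else 0) - d) ^ 2 =
        S * ((n N : ℝ))⁻¹ * (1 - 2 * d) * ((X i ω)⁻¹ * (if Y i ω ≤ y then (1:ℝ) else 0)) +
          S * ((n N : ℝ))⁻¹ * d ^ 2 * (X i ω)⁻¹ -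
          ((1 - 2 * d) * (if Y i ω ≤ y then (1:ℝ) else 0) + d ^ 2) := by
    intro i _
    have hXi : X i ω ≠ 0 := (hXpos i).ne'
    by_cases hY : Y i ω ≤ y <;> simp only [hY, if_true, if_false] <;>
      · field_simp
        ring
  rw [Finset.sum_congr rfl key]
  rw [Finset.sum_sub_distrib, Finset.sum_add_distrib, Finset.sum_add_distrib,
    ← Finset.mul_sum, ← Finset.mul_sum, ← Finset.mul_sum, Finset.sum_const,
    Finset.card_range, nsmul_eq_mul]
  rw [← hDdef, ← hBdef, ← hCdef, hd]
  field_simp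
end

section
/- For every fixed y ∈ ℝ, as N → ∞, B_{2,N}(y) := [N⁻¹∑_{i=1}^N (1 − π_i)(1{Y_i ≤ y} − F_N(y))]² / [N⁻¹∑_{i=1}^N π_i(1 − π_i)] converges ℙ-almost surely to (f²/d)·(F(y) − k₁(y)/𝔼[X₁])², where k₁(y) = 𝔼[X₁ 1{Y₁ ≤ y}] and d = f(1 − 𝔼[X₁²]/𝔼[X₁]²) + f(1−f)·𝔼[X₁²]/𝔼[X₁]². (Auxiliary claim (limite_b2) in the proof of Lemma 3.) -/
open MeasureTheory ProbabilityTheory Filter Topology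

set_option maxHeartbeats 2000000

/-- Auxiliary claim (limite_b2) in the proof of Lemma 3: for every fixed `y`,
`B_{2,N}(y) = [N⁻¹ ∑ᵢ (1−πᵢ)(1{Yᵢ≤y} − F_N(y))]² / [N⁻¹ ∑ᵢ πᵢ(1−πᵢ)]` converges a.s. to
`(f²/d)(F(y) − k₁(y)/𝔼[X₁])²`. -/
theorem stmt_11
    {Ω : Type*} [MeasurableSpace Ω] (P : Measure Ω) [IsProbabilityMeasure P]
    (Y X : ℕ → Ω → ℝ)
    (hmeas : ∀ i, Measurable fun ω => (Y i ω, X i ω))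
    (hindep : iIndepFun (fun i ω => (Y i ω, X i ω)) P)
    (hident : ∀ i, IdentDistrib (fun ω => (Y i ω, X i ω)) (fun ω => (Y 0 ω, X 0 ω)) P P)
    (hpos : ∀ i, ∀ᵐ ω ∂P, 0 < X i ω)
    (hm2 : Integrable (fun ω => X 0 ω ^ 2) P)
    (hminv : Integrable (fun ω => (X 0 ω)⁻¹) P)
    (n : ℕ → ℕ) (f : ℝ) (hf0 : 0 < f) (hf1 : f < 1)
    (hfN : Tendsto (fun N : ℕ => (n N : ℝ) / N) atTop (𝓝 f))
    (d : ℝ)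
    (hd : d = f * (1 - (∫ ω, X 0 ω ^ 2 ∂P) / (∫ ω, X 0 ω ∂P) ^ 2) +
        f * (1 - f) * ((∫ ω, X 0 ω ^ 2 ∂P) / (∫ ω, X 0 ω ∂P) ^ 2))
    (hdpos : 0 < d) :
    ∀ y : ℝ, ∀ᵐ ω ∂P,
      Tendsto (fun N : ℕ =>
          ((N : ℝ)⁻¹ * ∑ i ∈ Finset.range N,
              (1 - (n N : ℝ) * X i ω / ∑ j ∈ Finset.range N, X j ω) *
                ((if Y i ω ≤ y then (1 : ℝ) else 0) -
                  (N : ℝ)⁻¹ * ∑ k ∈ Finset.range N, if Y k ω ≤ y then (1 : ℝ) else 0)) ^ 2 /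
            ((N : ℝ)⁻¹ * ∑ i ∈ Finset.range N,
              ((n N : ℝ) * X i ω / ∑ j ∈ Finset.range N, X j ω) *
                (1 - (n N : ℝ) * X i ω / ∑ j ∈ Finset.range N, X j ω))) atTop
        (𝓝 (f ^ 2 / d *
            ((P {ω | Y 0 ω ≤ y}).toReal -
              (∫ ω, X 0 ω * (if Y 0 ω ≤ y then (1 : ℝ) else 0) ∂P) / ∫ ω, X 0 ω ∂P) ^ 2)) := by
  intro y
  have hXmeas : ∀ i, Measurable (X i) := fun i => measurable_snd.comp (hmeas i)
  have hYmeas : ∀ i, Measurable (Y i) := fun i => measurable_fst.comp (hmeas i)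
  -- SLLN helper for functions of the pair (Y i, X i)
  have slln : ∀ g : ℝ × ℝ → ℝ, Measurable g → Integrable (fun ω => g (Y 0 ω, X 0 ω)) P →
      ∀ᵐ ω ∂P, Tendsto (fun N : ℕ => (∑ i ∈ Finset.range N, g (Y i ω, X i ω)) / N) atTop
        (𝓝 (∫ ω, g (Y 0 ω, X 0 ω) ∂P)) := by
    intro g hg hgint
    exact strong_law_ae_real _ hgint
      (fun i j hij =>
        ((hindep.comp (fun _ => g) (fun _ => hg)).indepFun hij))
      (fun i => (hident i).comp hg)
  -- the four functions
  have hindmeas : Measurable fun p : ℝ × ℝ => if p.1 ≤ y then (1 : ℝ) else 0 :=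
    Measurable.ite (measurableSet_le measurable_fst measurable_const)
      measurable_const measurable_const
  have hX0int : Integrable (X 0) P := by
    refine (hm2.add (integrable_const 1)).mono' (hXmeas 0).aestronglyMeasurable
      (Filter.Eventually.of_forall fun ω => ?_)
    have h2 : |X 0 ω| ^ 2 = X 0 ω ^ 2 := sq_abs _
    have h3 : |X 0 ω| ≤ X 0 ω ^ 2 + 1 := by nlinarith [sq_nonneg (|X 0 ω| - 1), abs_nonneg (X 0 ω)]
    simpa [Real.norm_eq_abs] using h3
  have hindint : Integrable (fun ω => if Y 0 ω ≤ y then (1 : ℝ) else 0) P := by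
    refine (integrable_const (1 : ℝ)).mono'
      (hindmeas.comp (hmeas 0)).aestronglyMeasurable
      (Filter.Eventually.of_forall fun ω => ?_)
    rw [Real.norm_eq_abs]
    by_cases h : Y 0 ω ≤ y <;> simp [h]
  have hXIint : Integrable (fun ω => X 0 ω * if Y 0 ω ≤ y then (1 : ℝ) else 0) P := by
    refine hX0int.abs.mono'
      ((hXmeas 0).mul (hindmeas.comp (hmeas 0))).aestronglyMeasurable
      (Filter.Eventually.of_forall fun ω => ?_)
    rw [Real.norm_eq_abs, abs_mul]
    by_cases h : Y 0 ω ≤ y <;> simp [h, abs_nonneg]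
  -- mean of X is positive
  have hμpos : 0 < ∫ ω, X 0 ω ∂P := by
    have hne : (P : Measure Ω) ≠ 0 := IsProbabilityMeasure.ne_zero P
    have : (ae P).NeBot := ae_neBot.2 hne
    have hnonneg : 0 ≤ᵐ[P] X 0 := (hpos 0).mono fun ω h => h.le
    rcases lt_or_eq_of_le (integral_nonneg_of_ae hnonneg) with h | h
    · exact h
    · exfalso
      have h0 : X 0 =ᵐ[P] 0 :=
        (integral_eq_zero_iff_of_nonneg_ae hnonneg hX0int).1 h.symm
      obtain ⟨ω, h1, h2⟩ := ((hpos 0).and h0).exists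
      simp only [Pi.zero_apply] at h2
      exact absurd h2 (ne_of_gt h1)
  have hμne : (∫ ω, X 0 ω ∂P) ≠ 0 := ne_of_gt hμpos
  -- the four SLLN statements
  have sA := slln _ hindmeas hindint
  have sB := slln (fun p => p.2) measurable_snd hX0int
  have sC := slln (fun p : ℝ × ℝ => p.2 * if p.1 ≤ y then (1 : ℝ) else 0) (measurable_snd.mul hindmeas) hXIint
  have sQ := slln (fun p => p.2 ^ 2) (measurable_snd.pow_const 2) hm2
  -- identify F(y)
  have hFy : (∫ ω, if Y 0 ω ≤ y then (1 : ℝ) else 0 ∂P) = (P {ω | Y 0 ω ≤ y}).toReal := by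
    have hs : MeasurableSet {ω | Y 0 ω ≤ y} := measurableSet_le (hYmeas 0) measurable_const
    rw [← Measure.real_def, ← integral_indicator_one hs]
    congr 1
  set μ1 := ∫ ω, X 0 ω ∂P with hμ1
  set m2 := ∫ ω, X 0 ω ^ 2 ∂P with hm2def
  set k1 := ∫ ω, X 0 ω * if Y 0 ω ≤ y then (1 : ℝ) else 0 ∂P with hk1
  set Fy := ∫ ω, if Y 0 ω ≤ y then (1 : ℝ) else 0 ∂P with hFydef
  filter_upwards [sA, sB, sC, sQ, ae_all_iff.2 hpos] with ω hA hB hC hQ hposω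
  -- notation for the averages
  set ind : ℕ → ℝ := fun i => if Y i ω ≤ y then (1 : ℝ) else 0 with hind
  have hA' : Tendsto (fun N : ℕ => (∑ i ∈ Finset.range N, ind i) / N) atTop (𝓝 Fy) := hA
  have hB' : Tendsto (fun N : ℕ => (∑ i ∈ Finset.range N, X i ω) / N) atTop (𝓝 μ1) := hB
  have hC' : Tendsto (fun N : ℕ => (∑ i ∈ Finset.range N, X i ω * ind i) / N) atTop (𝓝 k1) := hC
  have hQ' : Tendsto (fun N : ℕ => (∑ i ∈ Finset.range N, X i ω ^ 2) / N) atTop (𝓝 m2) := hQ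
  -- the model sequence
  have hdl : d = f - f ^ 2 * (m2 / μ1 ^ 2) := by rw [hd]; ring
  have hdne : f - f ^ 2 * (m2 / μ1 ^ 2) ≠ 0 := by rw [← hdl]; exact ne_of_gt hdpos
  have hT : Tendsto (fun N : ℕ =>
      ((n N : ℝ) / N * ((∑ i ∈ Finset.range N, ind i) / N
          - ((∑ i ∈ Finset.range N, X i ω * ind i) / N) / ((∑ i ∈ Finset.range N, X i ω) / N))) ^ 2 /
        ((n N : ℝ) / N - ((n N : ℝ) / N) ^ 2 *
          (((∑ i ∈ Finset.range N, X i ω ^ 2) / N) / ((∑ i ∈ Finset.range N, X i ω) / N) ^ 2)))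
      atTop (𝓝 ((f * (Fy - k1 / μ1)) ^ 2 / (f - f ^ 2 * (m2 / μ1 ^ 2)))) := by
    refine Tendsto.div ?_ ?_ hdne
    · exact ((hfN.mul (hA'.sub (hC'.div hB' hμne))).pow 2)
    · exact hfN.sub ((hfN.pow 2).mul (hQ'.div (hB'.pow 2) (pow_ne_zero 2 hμne)))
  -- identify the limit value
  have hval : (f * (Fy - k1 / μ1)) ^ 2 / (f - f ^ 2 * (m2 / μ1 ^ 2))
      = f ^ 2 / d * ((P {ω | Y 0 ω ≤ y}).toReal - k1 / μ1) ^ 2 := by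
    rw [← hdl, ← hFy]; ring
  rw [← hval]
  -- now show the actual sequence is eventually equal to the model sequence
  refine Tendsto.congr' ?_ hT
  filter_upwards [eventually_ge_atTop 1] with N hN
  have hNpos : (0 : ℝ) < N := by exact_mod_cast hN
  have hNne : (N : ℝ) ≠ 0 := ne_of_gt hNpos
  set S := ∑ j ∈ Finset.range N, X j ω with hSdef
  have hSpos : 0 < S := Finset.sum_pos (fun i _ => hposω i)
    (Finset.nonempty_range_iff.2 (by omega))
  have hSne : S ≠ 0 := ne_of_gt hSpos
  set s1 := ∑ i ∈ Finset.range N, ind i with hs1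
  set sx1 := ∑ i ∈ Finset.range N, X i ω * ind i with hsx1
  set sx2 := ∑ i ∈ Finset.range N, X i ω ^ 2 with hsx2
  -- numerator identity
  have e1 : (∑ i ∈ Finset.range N,
        (1 - (n N : ℝ) * X i ω / S) * (ind i - (N : ℝ)⁻¹ * s1))
      = s1 - N * ((N : ℝ)⁻¹ * s1) - ((n N : ℝ) / S) * sx1
        + ((n N : ℝ) / S) * ((N : ℝ)⁻¹ * s1) * S := by
    have h : ∀ i ∈ Finset.range N,
        (1 - (n N : ℝ) * X i ω / S) * (ind i - (N : ℝ)⁻¹ * s1)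
          = (ind i - (N : ℝ)⁻¹ * s1) - ((n N : ℝ) / S) * (X i ω * ind i)
            + (((n N : ℝ) / S) * ((N : ℝ)⁻¹ * s1)) * X i ω := fun i _ => by ring
    rw [Finset.sum_congr rfl h]
    simp only [Finset.sum_add_distrib, Finset.sum_sub_distrib, ← Finset.mul_sum,
      Finset.sum_const, Finset.card_range, nsmul_eq_mul, hs1, hsx1, hSdef]
    ring
  -- denominator identity
  have e2 : (∑ i ∈ Finset.range N,
        ((n N : ℝ) * X i ω / S) * (1 - (n N : ℝ) * X i ω / S))
      = ((n N : ℝ) / S) * S - ((n N : ℝ) / S) ^ 2 * sx2 := by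
    have h : ∀ i ∈ Finset.range N,
        ((n N : ℝ) * X i ω / S) * (1 - (n N : ℝ) * X i ω / S)
          = ((n N : ℝ) / S) * X i ω - ((n N : ℝ) / S) ^ 2 * X i ω ^ 2 := fun i _ => by ring
    rw [Finset.sum_congr rfl h]
    simp only [Finset.sum_sub_distrib, ← Finset.mul_sum, hsx2, hSdef]
  have h1 : (N : ℝ)⁻¹ * (s1 - N * ((N : ℝ)⁻¹ * s1) - ((n N : ℝ) / S) * sx1
        + ((n N : ℝ) / S) * ((N : ℝ)⁻¹ * s1) * S)
      = (n N : ℝ) / N * (s1 / N - sx1 / N / (S / N)) := by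
    field_simp
    ring
  have h2 : (N : ℝ)⁻¹ * (((n N : ℝ) / S) * S - ((n N : ℝ) / S) ^ 2 * sx2)
      = (n N : ℝ) / N - ((n N : ℝ) / N) ^ 2 * (sx2 / N / (S / N) ^ 2) := by
    field_simp
  rw [e1, e2, h1, h2]
end

section
/- Under the superpopulation setup and the high-entropy design hypothesis, for ℙ-almost all realizations of the sequence ((Y_i, X_i))_{i≥1} the following holds: for every fixed y ∈ ℝ and every ε > 0, the design probability P_N( |F̂_H(y) − F_N(y)| > ε ) tends to 0 as N → ∞; that is, the Hájek estimator F̂_H(y) converges to F_N(y) in probability with respect to the sampling design. (Claim (gliv1), the pointwise consistency underlying Proposition 2 of the paper.) -/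
open MeasureTheory ProbabilityTheory Filter Topology

/-- Variance bound + Chebyshev for a Horvitz–Thompson-type sum under a high-entropy design. -/
theorem cheb_bound {Ω' : Type*} [MeasurableSpace Ω'] (P' : Measure Ω') [IsProbabilityMeasure P']
    (N : ℕ) (D : ℕ → Ω' → ℝ)
    (hD01 : ∀ i ω', D i ω' = 0 ∨ D i ω' = 1)
    (hDmeas : ∀ i, Measurable (D i))
    (π : ℕ → ℝ) (hπ : ∀ i < N, 0 < π i)
    (hmean : ∀ i < N, ∫ ω', D i ω' ∂P' = π i)
    (C : ℝ) (hC : 0 ≤ C)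
    (hcov : ∀ i < N, ∀ j < N, i ≠ j →
      |(∫ ω', D i ω' * D j ω' ∂P') - π i * π j| ≤ C / N * (π i * π j))
    (b : ℕ → ℝ) (hb : ∀ i, b i = 0 ∨ b i = 1)
    (δ : ℝ) (hδ : 0 < δ) (hN : 0 < N) :
    (P' {ω' | δ < |(∑ i ∈ Finset.range N, b i * (π i)⁻¹ * D i ω') / N
        - (∑ i ∈ Finset.range N, b i) / N|}).toReal
      ≤ ((∑ i ∈ Finset.range N, (π i)⁻¹) + C * N) / (δ * N) ^ 2 := by
  set c : ℕ → ℝ := fun i => b i * (π i)⁻¹ with hc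
  set E : ℕ → Ω' → ℝ := fun i ω' => D i ω' - π i with hE
  have hb01 : ∀ i, 0 ≤ b i ∧ b i ≤ 1 := by
    intro i; rcases hb i with h | h <;> simp [h]
  have hD01' : ∀ i ω', 0 ≤ D i ω' ∧ D i ω' ≤ 1 := by
    intro i ω'; rcases hD01 i ω' with h | h <;> simp [h]
  have hDint : ∀ i, Integrable (D i) P' :=
    fun i => (integrable_const (1 : ℝ)).mono' (hDmeas i).aestronglyMeasurable
      (Filter.Eventually.of_forall fun ω' => by
        rw [Real.norm_eq_abs, abs_le]; constructor <;> linarith [(hD01' i ω').1, (hD01' i ω').2])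
  have hDDint : ∀ i j, Integrable (fun ω' => D i ω' * D j ω') P' := by
    intro i j
    refine (integrable_const (1 : ℝ)).mono' ((hDmeas i).mul (hDmeas j)).aestronglyMeasurable
      (Filter.Eventually.of_forall fun ω' => ?_)
    rw [Real.norm_eq_abs, abs_mul]
    have h1 := hD01' i ω'; have h2 := hD01' j ω'
    calc |D i ω'| * |D j ω'| ≤ 1 * 1 := by
          apply mul_le_mul <;> [skip; skip; positivity; norm_num] <;>
            rw [abs_le] <;> constructor <;> linarith [h1.1, h1.2, h2.1, h2.2]
      _ = 1 := by norm_num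
  have hEint : ∀ i j, Integrable (fun ω' => E i ω' * E j ω') P' := by
    intro i j
    have : (fun ω' => E i ω' * E j ω')
        = fun ω' => D i ω' * D j ω' - π j * D i ω' - π i * D j ω' + π i * π j := by
      funext ω'; simp only [hE]; ring
    rw [this]
    exact (((hDDint i j).sub ((hDint i).const_mul _)).sub ((hDint j).const_mul _)).add
      (integrable_const _)
  have hEE : ∀ i < N, ∀ j < N, ∫ ω', E i ω' * E j ω' ∂P'
      = (∫ ω', D i ω' * D j ω' ∂P') - π i * π j := by
    intro i hi j hj
    have h : (fun ω' => E i ω' * E j ω')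
        = fun ω' => D i ω' * D j ω' - π j * D i ω' - π i * D j ω' + π i * π j := by
      funext ω'; simp only [hE]; ring
    rw [h, integral_add, integral_sub, integral_sub, integral_const_mul, integral_const_mul,
      integral_const, hmean i hi, hmean j hj]
    · simp; ring
    · exact hDDint i j
    · exact (hDint i).const_mul _
    · exact ((hDDint i j).sub ((hDint i).const_mul _))
    · exact (hDint j).const_mul _
    · exact (((hDDint i j).sub ((hDint i).const_mul _)).sub ((hDint j).const_mul _))
    · exact integrable_const _
  -- variance bound
  have hVar : ∫ ω', ((∑ i ∈ Finset.range N, c i * E i ω')) ^ 2 ∂P'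
      ≤ (∑ i ∈ Finset.range N, (π i)⁻¹) + C * N := by
    have hsq : ∀ ω', (∑ i ∈ Finset.range N, c i * E i ω') ^ 2
        = ∑ i ∈ Finset.range N, ∑ j ∈ Finset.range N, (c i * c j) * (E i ω' * E j ω') := by
      intro ω'
      rw [sq, Finset.sum_mul_sum]
      exact Finset.sum_congr rfl fun i _ => Finset.sum_congr rfl fun j _ => by ring
    have h1 : ∫ ω', (∑ i ∈ Finset.range N, c i * E i ω') ^ 2 ∂P'
        = ∑ i ∈ Finset.range N, ∑ j ∈ Finset.range N,
            (c i * c j) * ∫ ω', E i ω' * E j ω' ∂P' := by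
      simp_rw [hsq]
      rw [integral_finset_sum _ (fun i _ => integrable_finset_sum _
        (fun j _ => (hEint i j).const_mul _))]
      refine Finset.sum_congr rfl fun i _ => ?_
      rw [integral_finset_sum _ (fun j _ => (hEint i j).const_mul _)]
      exact Finset.sum_congr rfl fun j _ => integral_const_mul _ _
    rw [h1]
    have hterm : ∀ i ∈ Finset.range N, ∀ j ∈ Finset.range N,
        (c i * c j) * ∫ ω', E i ω' * E j ω' ∂P'
          ≤ (if i = j then (π i)⁻¹ else 0) + C / N := by
      intro i hi j hj
      rw [Finset.mem_range] at hi hj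
      have hπi := hπ i hi; have hπj := hπ j hj
      have hci : 0 ≤ c i := mul_nonneg (hb01 i).1 (inv_nonneg.2 hπi.le)
      have hcj : 0 ≤ c j := mul_nonneg (hb01 j).1 (inv_nonneg.2 hπj.le)
      rcases eq_or_ne i j with rfl | hij
      · rw [if_pos rfl]
        have hDD : (fun ω' => D i ω' * D i ω') = D i := by
          funext ω'; rcases hD01 i ω' with h | h <;> simp [h]
        have : ∫ ω', E i ω' * E i ω' ∂P' = π i - π i ^ 2 := by
          rw [hEE i hi i hi, hDD, hmean i hi]; ring
        rw [this]
        have h2 : c i * c i * (π i - π i ^ 2) ≤ c i * c i * π i := by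
          nlinarith [sq_nonneg (π i), mul_nonneg hci hci]
        have h3 : c i * c i * π i ≤ (π i)⁻¹ := by
          have : c i * c i * π i = b i * b i * (π i)⁻¹ := by
            simp only [hc]
            linear_combination (b i * b i * (π i)⁻¹) * inv_mul_cancel₀ hπi.ne'
          rw [this]
          have hbi := hb01 i
          have hbb : b i * b i ≤ 1 := by nlinarith [hbi.1, hbi.2]
          nlinarith [mul_nonneg (sub_nonneg.2 hbb) (inv_nonneg.2 hπi.le)]
        have hCN : 0 ≤ C / N := div_nonneg hC (Nat.cast_nonneg N)
        linarith
      · simp only [if_neg hij, zero_add]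
        rw [hEE i hi j hj]
        have hcb := hcov i hi j hj hij
        calc c i * c j * ((∫ ω', D i ω' * D j ω' ∂P') - π i * π j)
            ≤ c i * c j * (C / N * (π i * π j)) := by
              apply mul_le_mul_of_nonneg_left _ (mul_nonneg hci hcj)
              exact le_trans (le_abs_self _) hcb
          _ = (b i * b j) * (C / N) := by
              simp only [hc]
              linear_combination (b i * b j * (C / N) * ((π j)⁻¹ * π j)) * inv_mul_cancel₀ hπi.ne' +
                (b i * b j * (C / N)) * inv_mul_cancel₀ hπj.ne'
          _ ≤ 1 * (C / N) := by
              apply mul_le_mul_of_nonneg_right _ (div_nonneg hC (Nat.cast_nonneg N))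
              nlinarith [(hb01 i).1, (hb01 i).2, (hb01 j).1, (hb01 j).2]
          _ = C / N := one_mul _
    calc ∑ i ∈ Finset.range N, ∑ j ∈ Finset.range N,
          (c i * c j) * ∫ ω', E i ω' * E j ω' ∂P'
        ≤ ∑ i ∈ Finset.range N, ∑ j ∈ Finset.range N,
            ((if i = j then (π i)⁻¹ else 0) + C / N) :=
          Finset.sum_le_sum fun i hi => Finset.sum_le_sum fun j hj => hterm i hi j hj
      _ = (∑ i ∈ Finset.range N, (π i)⁻¹) + C * N := by
          have hNne : (N : ℝ) ≠ 0 := Nat.cast_ne_zero.2 hN.ne'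
          simp only [Finset.sum_add_distrib, Finset.sum_const, Finset.card_range, nsmul_eq_mul]
          rw [Finset.sum_congr rfl fun i hi => Finset.sum_ite_eq (Finset.range N) i
            (fun _ => (π i)⁻¹)]
          have : ∀ i ∈ Finset.range N, (if i ∈ Finset.range N then (π i)⁻¹ else 0) = (π i)⁻¹ :=
            fun i hi => if_pos hi
          rw [Finset.sum_congr rfl this]
          field_simp
  -- Chebyshev
  set T : Ω' → ℝ := fun ω' => ∑ i ∈ Finset.range N, b i * (π i)⁻¹ * D i ω' with hT
  set M : ℝ := ∑ i ∈ Finset.range N, b i with hM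
  have hTM : ∀ ω', T ω' - M = ∑ i ∈ Finset.range N, c i * E i ω' := by
    intro ω'
    rw [hT, hM]
    simp only [hc, hE]
    rw [← Finset.sum_sub_distrib]
    refine Finset.sum_congr rfl fun i hi => ?_
    rw [Finset.mem_range] at hi
    have hne : π i ≠ 0 := (hπ i hi).ne'
    field_simp
  have hint2 : Integrable (fun ω' => (T ω' - M) ^ 2) P' := by
    have : (fun ω' => (T ω' - M) ^ 2)
        = fun ω' => ∑ i ∈ Finset.range N, ∑ j ∈ Finset.range N,
            (c i * c j) * (E i ω' * E j ω') := by
      funext ω'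
      rw [hTM ω', sq, Finset.sum_mul_sum]
      exact Finset.sum_congr rfl fun i _ => Finset.sum_congr rfl fun j _ => by ring
    rw [this]
    exact integrable_finset_sum _ fun i _ => integrable_finset_sum _
      fun j _ => (hEint i j).const_mul _
  have hsub : {ω' : Ω' | δ < |T ω' / N - M / N|}
      ⊆ {ω' : Ω' | (δ * N) ^ 2 ≤ (T ω' - M) ^ 2} := by
    intro ω' hω'
    simp only [Set.mem_setOf_eq] at hω' ⊢
    have hNpos : (0 : ℝ) < N := Nat.cast_pos.2 hN
    have h1 : T ω' / N - M / N = (T ω' - M) / N := by ring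
    rw [h1, abs_div, abs_of_pos hNpos, lt_div_iff₀ hNpos] at hω'
    calc (δ * N) ^ 2 ≤ |T ω' - M| ^ 2 := by
          apply pow_le_pow_left₀ (by positivity) hω'.le
      _ = (T ω' - M) ^ 2 := sq_abs _
  have hcheb := mul_meas_ge_le_integral_of_nonneg
    (Filter.Eventually.of_forall fun ω' => sq_nonneg (T ω' - M)) hint2 ((δ * N) ^ 2)
  have hmono : (P' {ω' : Ω' | δ < |T ω' / N - M / N|}).toReal
      ≤ (P' {ω' : Ω' | (δ * N) ^ 2 ≤ (T ω' - M) ^ 2}).toReal :=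
    ENNReal.toReal_mono (measure_ne_top _ _) (measure_mono hsub)
  have hδN : (0 : ℝ) < (δ * N) ^ 2 := by
    have : (0:ℝ) < N := Nat.cast_pos.2 hN
    positivity
  have hVar' : ∫ ω', (T ω' - M) ^ 2 ∂P' ≤ (∑ i ∈ Finset.range N, (π i)⁻¹) + C * N := by
    calc ∫ ω', (T ω' - M) ^ 2 ∂P'
        = ∫ ω', (∑ i ∈ Finset.range N, c i * E i ω') ^ 2 ∂P' := by
          rw [show (fun ω' => (T ω' - M) ^ 2)
              = fun ω' => (∑ i ∈ Finset.range N, c i * E i ω') ^ 2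
            from funext fun ω' => by rw [hTM]]
      _ ≤ _ := hVar
  calc (P' {ω' | δ < |(∑ i ∈ Finset.range N, b i * (π i)⁻¹ * D i ω') / N
        - (∑ i ∈ Finset.range N, b i) / N|}).toReal
      ≤ (P' {ω' : Ω' | (δ * N) ^ 2 ≤ (T ω' - M) ^ 2}).toReal := hmono
    _ ≤ (∫ ω', (T ω' - M) ^ 2 ∂P') / (δ * N) ^ 2 := by
        rw [le_div_iff₀ hδN, mul_comm]; exact hcheb
    _ ≤ ((∑ i ∈ Finset.range N, (π i)⁻¹) + C * N) / (δ * N) ^ 2 := by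
        gcongr

set_option maxHeartbeats 1000000 in
/-- Claim (gliv1): pointwise design-consistency of the Hájek estimator of the population
distribution function, for almost all realizations of the superpopulation. -/
theorem stmt_13
    {Ω Ω' : Type*} [MeasurableSpace Ω] [MeasurableSpace Ω']
    (P : Measure Ω) [IsProbabilityMeasure P]
    (Y X : ℕ → Ω → ℝ)
    (hmeas : ∀ i, Measurable fun ω => (Y i ω, X i ω))
    (hindep : iIndepFun (fun i ω => (Y i ω, X i ω)) P)
    (hident : ∀ i, IdentDistrib (fun ω => (Y i ω, X i ω)) (fun ω => (Y 0 ω, X 0 ω)) P P)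
    (hpos : ∀ i, ∀ᵐ ω ∂P, 0 < X i ω)
    (hm2 : Integrable (fun ω => X 0 ω ^ 2) P)
    (hminv : Integrable (fun ω => (X 0 ω)⁻¹) P)
    (n : ℕ → ℕ) (f : ℝ) (hf0 : 0 < f) (hf1 : f < 1)
    (hfN : Tendsto (fun N : ℕ => (n N : ℝ) / N) atTop (𝓝 f))
    -- the high-entropy sampling design: for each `N` and each realization `ω` of the
    -- superpopulation, a design law `Pd N ω` for the membership indicators `D N i`
    (C : ℝ) (hC : 0 < C)
    (Pd : ℕ → Ω → Measure Ω') (hPd : ∀ N ω, IsProbabilityMeasure (Pd N ω))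
    (D : ℕ → ℕ → Ω' → ℝ)
    (hD01 : ∀ N i ω', D N i ω' = 0 ∨ D N i ω' = 1)
    (hDmeas : ∀ N i, Measurable (D N i))
    (hmean : ∀ N (ω : Ω), (∀ j < N, 0 < X j ω) → ∀ i < N,
      ∫ ω', D N i ω' ∂(Pd N ω) = (n N : ℝ) * X i ω / ∑ j ∈ Finset.range N, X j ω)
    (hcov : ∀ N (ω : Ω), (∀ j < N, 0 < X j ω) → ∀ i < N, ∀ j < N, i ≠ j →
      |(∫ ω', D N i ω' * D N j ω' ∂(Pd N ω)) -
          ((n N : ℝ) * X i ω / ∑ k ∈ Finset.range N, X k ω) *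
            ((n N : ℝ) * X j ω / ∑ k ∈ Finset.range N, X k ω)| ≤
        C / N * (((n N : ℝ) * X i ω / ∑ k ∈ Finset.range N, X k ω) *
          ((n N : ℝ) * X j ω / ∑ k ∈ Finset.range N, X k ω))) :
    ∀ᵐ ω ∂P, ∀ y : ℝ, ∀ ε > (0 : ℝ),
      Tendsto (fun N : ℕ =>
          Pd N ω {ω' | ε <
            |(∑ i ∈ Finset.range N,
                D N i ω' * ((n N : ℝ) * X i ω / ∑ j ∈ Finset.range N, X j ω)⁻¹ *
                  (if Y i ω ≤ y then (1 : ℝ) else 0)) /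
                (∑ i ∈ Finset.range N,
                  D N i ω' * ((n N : ℝ) * X i ω / ∑ j ∈ Finset.range N, X j ω)⁻¹) -
              (N : ℝ)⁻¹ * ∑ i ∈ Finset.range N, (if Y i ω ≤ y then (1 : ℝ) else 0)|})
        atTop (𝓝 0) := by
  -- measurability and integrability of the X's
  have hXmeas : ∀ i, Measurable (X i) := fun i => (measurable_snd.comp (hmeas i))
  have hX0int : Integrable (X 0) P := by
    refine (hm2.add (integrable_const 1)).mono' (hXmeas 0).aestronglyMeasurable ?_
    filter_upwards with ω
    rw [Real.norm_eq_abs]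
    simp only [Pi.add_apply]
    nlinarith [sq_nonneg (|X 0 ω| - 1), sq_abs (X 0 ω), abs_nonneg (X 0 ω)]
  have hXindep : Pairwise (Function.onFun (IndepFun · · P) X) := fun i j hij =>
    (hindep.indepFun hij).comp measurable_snd measurable_snd
  have hXident : ∀ i, IdentDistrib (X i) (X 0) P P := fun i => (hident i).comp measurable_snd
  have hSLLN1 := ProbabilityTheory.strong_law_ae X hX0int hXindep hXident
  have hXinvindep : Pairwise (Function.onFun (IndepFun · · P) fun i ω => (X i ω)⁻¹) := fun i j hij =>
    (hindep.indepFun hij).comp (measurable_inv.comp measurable_snd)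
      (measurable_inv.comp measurable_snd)
  have hXinvident : ∀ i, IdentDistrib (fun ω => (X i ω)⁻¹) (fun ω => (X 0 ω)⁻¹) P P :=
    fun i => (hident i).comp (measurable_inv.comp measurable_snd)
  have hSLLN2 := ProbabilityTheory.strong_law_ae (fun i ω => (X i ω)⁻¹) hminv
    hXinvindep hXinvident
  filter_upwards [hSLLN1, hSLLN2, ae_all_iff.2 hpos] with ω hS hSinv hX
  intro y ε hε
  -- notation
  set μX : ℝ := P[X 0] with hμX
  set νX : ℝ := P[fun ω => (X 0 ω)⁻¹] with hνX
  set a : ℕ → ℝ := fun i => if Y i ω ≤ y then (1 : ℝ) else 0 with ha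
  set S : ℕ → ℝ := fun N => ∑ j ∈ Finset.range N, X j ω with hSdef
  set δ : ℝ := min (1/2 : ℝ) (ε/4) with hδdef
  have hδ : 0 < δ := lt_min (by norm_num) (by linarith)
  have hδhalf : δ ≤ 1/2 := min_le_left _ _
  have hδε : δ ≤ ε/4 := min_le_right _ _
  set V : ℕ → ℝ := fun N =>
    (∑ i ∈ Finset.range N, ((n N : ℝ) * X i ω / S N)⁻¹) + C * N with hVdef
  -- eventually n N ≥ 1 and N ≥ 1
  have hev : ∀ᶠ N : ℕ in atTop, 1 ≤ N ∧ 1 ≤ n N := by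
    have h1 : ∀ᶠ N : ℕ in atTop, f/2 < (n N : ℝ) / N :=
      hfN.eventually (eventually_gt_nhds (by linarith))
    filter_upwards [h1, eventually_ge_atTop 1] with N hN1 hN2
    refine ⟨hN2, ?_⟩
    by_contra h
    push_neg at h
    interval_cases h' : n N
    · simp at hN1; linarith
  -- limit of the normalized variance bound
  have hVN : Tendsto (fun N : ℕ => V N / (N : ℝ) ^ 2) atTop (𝓝 0) := by
    have hNinv : Tendsto (fun N : ℕ => (N : ℝ)⁻¹) atTop (𝓝 0) :=
      tendsto_inv_atTop_nhds_zero_nat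
    have hS' : Tendsto (fun N : ℕ => S N / N) atTop (𝓝 μX) := by
      refine hS.congr fun N => ?_
      simp [hSdef, smul_eq_mul, div_eq_inv_mul]
    have hSinv' : Tendsto (fun N : ℕ => (∑ i ∈ Finset.range N, (X i ω)⁻¹) / N)
        atTop (𝓝 νX) := by
      refine hSinv.congr fun N => ?_
      simp [smul_eq_mul, div_eq_inv_mul]
    have hfinv : Tendsto (fun N : ℕ => ((n N : ℝ) / N)⁻¹) atTop (𝓝 f⁻¹) :=
      hfN.inv₀ hf0.ne'
    have hE : Tendsto (fun N : ℕ =>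
        (S N / N) * ((∑ i ∈ Finset.range N, (X i ω)⁻¹) / N) * ((n N : ℝ) / N)⁻¹ * (N : ℝ)⁻¹
          + C * (N : ℝ)⁻¹) atTop (𝓝 (μX * νX * f⁻¹ * 0 + C * 0)) :=
      (((hS'.mul hSinv').mul hfinv).mul hNinv).add (tendsto_const_nhds.mul hNinv)
    rw [show μX * νX * f⁻¹ * 0 + C * 0 = 0 by ring] at hE
    refine Tendsto.congr' ?_ hE
    filter_upwards [hev] with N hN
    obtain ⟨hN1, hn1⟩ := hN
    have hNpos : (0 : ℝ) < N := by exact_mod_cast hN1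
    have hnpos : (0 : ℝ) < n N := by exact_mod_cast hn1
    have hSpos : 0 < S N := Finset.sum_pos (fun j hj => hX j)
      (Finset.nonempty_range_iff.2 (by omega))
    have hsum : ∑ i ∈ Finset.range N, ((n N : ℝ) * X i ω / S N)⁻¹
        = S N / (n N : ℝ) * ∑ i ∈ Finset.range N, (X i ω)⁻¹ := by
      rw [Finset.mul_sum]
      refine Finset.sum_congr rfl fun i hi => ?_
      have hXi := hX i
      field_simp
    rw [hVdef]
    simp only
    rw [hsum]
    field_simp
  -- the bound sequence
  have hbnd : Tendsto (fun N : ℕ =>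
      ENNReal.ofReal (V N / (δ * N) ^ 2) + ENNReal.ofReal (V N / (δ * N) ^ 2))
      atTop (𝓝 0) := by
    have h1 : Tendsto (fun N : ℕ => V N / (δ * N) ^ 2) atTop (𝓝 0) := by
      have h2 : Tendsto (fun N : ℕ => (V N / (N : ℝ) ^ 2) / δ ^ 2) atTop (𝓝 (0 / δ ^ 2)) :=
        hVN.div_const _
      rw [zero_div] at h2
      refine Tendsto.congr' ?_ h2
      filter_upwards [eventually_ge_atTop 1] with N hN1
      rw [div_div, mul_pow, mul_comm ((N:ℝ) ^ 2) (δ ^ 2)]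
    have h3 := (ENNReal.tendsto_ofReal h1).add (ENNReal.tendsto_ofReal h1)
    simpa using h3
  -- squeeze
  refine tendsto_of_tendsto_of_tendsto_of_le_of_le' tendsto_const_nhds hbnd
    (Filter.Eventually.of_forall fun N => zero_le) ?_
  filter_upwards [hev] with N hN
  obtain ⟨hN1, hn1⟩ := hN
  have hNpos : 0 < N := hN1
  have hNR : (0 : ℝ) < N := by exact_mod_cast hN1
  have hXj : ∀ j < N, 0 < X j ω := fun j _ => hX j
  have hSpos : 0 < S N := Finset.sum_pos (fun j hj => hX j)
    (Finset.nonempty_range_iff.2 (by omega))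
  have hnpos : (0 : ℝ) < n N := by exact_mod_cast hn1
  set π : ℕ → ℝ := fun i => (n N : ℝ) * X i ω / S N with hπdef
  have hπpos : ∀ i < N, 0 < π i := fun i hi => by
    have := hX i
    positivity
  haveI := hPd N ω
  have hmean' : ∀ i < N, ∫ ω', D N i ω' ∂(Pd N ω) = π i := fun i hi => hmean N ω hXj i hi
  have hcov' : ∀ i < N, ∀ j < N, i ≠ j →
      |(∫ ω', D N i ω' * D N j ω' ∂(Pd N ω)) - π i * π j| ≤ C / N * (π i * π j) :=
    fun i hi j hj hij => hcov N ω hXj i hi j hj hij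
  have ha01 : ∀ i, a i = 0 ∨ a i = 1 := fun i => by
    by_cases h : Y i ω ≤ y <;> simp [ha, h]
  have hB1 := cheb_bound (Pd N ω) N (D N) (hD01 N) (hDmeas N) π hπpos hmean' C hC.le hcov'
    a ha01 δ hδ hNpos
  have hB2 := cheb_bound (Pd N ω) N (D N) (hD01 N) (hDmeas N) π hπpos hmean' C hC.le hcov'
    (fun _ => (1 : ℝ)) (fun _ => Or.inr rfl) δ hδ hNpos
  -- set inclusion
  set s1 : Set Ω' := {ω' | δ < |(∑ i ∈ Finset.range N, a i * (π i)⁻¹ * D N i ω') / N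
      - (∑ i ∈ Finset.range N, a i) / N|} with hs1
  set s2 : Set Ω' := {ω' | δ < |(∑ i ∈ Finset.range N, (1 : ℝ) * (π i)⁻¹ * D N i ω') / N
      - (∑ i ∈ Finset.range N, (1 : ℝ)) / N|} with hs2
  have hsub : {ω' : Ω' | ε <
      |(∑ i ∈ Finset.range N, D N i ω' * (π i)⁻¹ * a i) /
          (∑ i ∈ Finset.range N, D N i ω' * (π i)⁻¹) -
        (N : ℝ)⁻¹ * ∑ i ∈ Finset.range N, a i|} ⊆ s1 ∪ s2 := by
    intro ω' hω'
    simp only [Set.mem_setOf_eq] at hω'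
    by_contra hcon
    simp only [Set.mem_union, hs1, hs2, Set.mem_setOf_eq, not_or, not_lt] at hcon
    obtain ⟨h1, h2⟩ := hcon
    set A : ℝ := ∑ i ∈ Finset.range N, D N i ω' * (π i)⁻¹ * a i with hA
    set B : ℝ := ∑ i ∈ Finset.range N, D N i ω' * (π i)⁻¹ with hB
    have heqA : (∑ i ∈ Finset.range N, a i * (π i)⁻¹ * D N i ω') = A := by
      rw [hA]; exact Finset.sum_congr rfl fun i _ => by ring
    have heqB : (∑ i ∈ Finset.range N, (1 : ℝ) * (π i)⁻¹ * D N i ω') = B := by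
      rw [hB]; exact Finset.sum_congr rfl fun i _ => by ring
    have hsum1 : (∑ i ∈ Finset.range N, (1 : ℝ)) = (N : ℝ) := by simp
    rw [heqA] at h1
    rw [heqB, hsum1, div_self hNR.ne'] at h2
    set F : ℝ := (N : ℝ)⁻¹ * ∑ i ∈ Finset.range N, a i with hF
    have hFeq : (∑ i ∈ Finset.range N, a i) / N = F := by rw [hF]; ring
    rw [hFeq] at h1
    have hF0 : 0 ≤ F := by
      rw [hF]
      have : (0:ℝ) ≤ ∑ i ∈ Finset.range N, a i :=
        Finset.sum_nonneg fun i _ => by rcases ha01 i with h | h <;> simp [h]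
      positivity
    have hF1 : F ≤ 1 := by
      rw [hF]
      have h3 : (∑ i ∈ Finset.range N, a i) ≤ ∑ i ∈ Finset.range N, (1:ℝ) :=
        Finset.sum_le_sum fun i _ => by rcases ha01 i with h | h <;> simp [h]
      rw [hsum1] at h3
      rw [inv_mul_le_iff₀ hNR, mul_one]
      exact h3
    set v : ℝ := B / N with hv
    have hv2 : 1/2 ≤ v := by
      have := abs_le.1 h2
      have := this.1
      simp only [hv] at *
      linarith
    have hvpos : 0 < v := by linarith
    have hBpos : 0 < B := by
      have : B = v * N := by rw [hv]; field_simp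
      rw [this]; positivity
    have hsplit : A / B - F = ((A / N) - F * v) / v := by
      rw [hv]
      field_simp
    have e1 : |A / N - F * v| ≤ δ + δ := by
      have habs : |A / N - F * v| ≤ |A / N - F| + |F - F * v| := abs_sub_le _ _ _
      have h4 : |F - F * v| = |F| * |1 - v| := by rw [← abs_mul]; ring_nf
      have h5 : |F| * |1 - v| ≤ 1 * δ := by
        apply mul_le_mul
        · rw [abs_of_nonneg hF0]; exact hF1
        · rw [abs_sub_comm]; exact h2
        · positivity
        · norm_num
      rw [h4] at habs
      linarith [h1]
    have e2 : |A / B - F| ≤ ε := by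
      rw [hsplit, abs_div, abs_of_pos hvpos, div_le_iff₀ hvpos]
      calc |A / N - F * v| ≤ δ + δ := e1
        _ ≤ ε / 2 := by linarith
        _ ≤ ε * v := by nlinarith
    linarith [hω', e2]
  -- conclude
  calc Pd N ω {ω' : Ω' | ε <
      |(∑ i ∈ Finset.range N, D N i ω' * (π i)⁻¹ * a i) /
          (∑ i ∈ Finset.range N, D N i ω' * (π i)⁻¹) -
        (N : ℝ)⁻¹ * ∑ i ∈ Finset.range N, a i|}
      ≤ Pd N ω (s1 ∪ s2) := measure_mono hsub
    _ ≤ Pd N ω s1 + Pd N ω s2 := measure_union_le _ _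
    _ ≤ ENNReal.ofReal (V N / (δ * N) ^ 2) + ENNReal.ofReal (V N / (δ * N) ^ 2) := by
        gcongr
        · rw [← ENNReal.ofReal_toReal (measure_ne_top (Pd N ω) s1)]
          exact ENNReal.ofReal_le_ofReal hB1
        · rw [← ENNReal.ofReal_toReal (measure_ne_top (Pd N ω) s2)]
          exact ENNReal.ofReal_le_ofReal hB2
end

section
/- Under the superpopulation setup and the high-entropy design hypothesis, for ℙ-almost all realizations of the sequence ((Y_i, X_i))_{i≥1} the following holds: for every ε > 0, the design probability P_N( sup_{y∈ℝ} |F̂_H(y) − F_N(y)| > ε ) tends to 0 as N → ∞; that is, sup_y |F̂_H(y) − F_N(y)| converges to 0 in probability with respect to the sampling design. (Proposition 2 of the paper, a Glivenko–Cantelli-type theorem for the Hájek estimator.) -/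
open MeasureTheory ProbabilityTheory Filter Topology Finset
open scoped ENNReal

section core
variable {Ω' : Type*} [MeasurableSpace Ω'] {ν : Measure Ω'} [IsProbabilityMeasure ν]

lemma integrable_of_bdd {f : Ω' → ℝ} (hm : Measurable f) {c : ℝ} (h : ∀ x, |f x| ≤ c) :
    Integrable f ν :=
  (integrable_const c).mono' hm.aestronglyMeasurable (ae_of_all _ h)

lemma chebyshev_weighted
    {N : ℕ} (hN : 1 ≤ N) {C : ℝ} (hC : 0 ≤ C)
    {w : ℕ → ℝ} (hw : ∀ i < N, 0 < w i)
    {D : ℕ → Ω' → ℝ} (hD01 : ∀ i x, D i x = 0 ∨ D i x = 1)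
    (hDmeas : ∀ i, Measurable (D i))
    (hmean : ∀ i < N, ∫ x, D i x ∂ν = (w i)⁻¹)
    (hcov : ∀ i < N, ∀ j < N, i ≠ j →
      |(∫ x, D i x * D j x ∂ν) - (w i)⁻¹ * (w j)⁻¹| ≤ C / N * ((w i)⁻¹ * (w j)⁻¹))
    {a : ℕ → ℝ} (ha : ∀ i, 0 ≤ a i ∧ a i ≤ 1)
    {δ : ℝ} (hδ : 0 < δ) :
    ν {x | δ < |(N:ℝ)⁻¹ * ∑ i ∈ range N, D i x * w i * a i - (N:ℝ)⁻¹ * ∑ i ∈ range N, a i|}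
      ≤ ENNReal.ofReal (((N:ℝ)⁻¹ ^ 2 * ∑ i ∈ range N, w i + C / N) / δ ^ 2) := by
  have hNpos : (0:ℝ) < N := by exact_mod_cast hN
  set g : ℕ → Ω' → ℝ := fun i x => a i * (w i * D i x - 1) with hg
  have hDbd : ∀ i x, 0 ≤ D i x ∧ D i x ≤ 1 := by
    intro i x; rcases hD01 i x with h | h <;> simp [h]
  have hgbd : ∀ i, i ∈ range N → ∀ x, |g i x| ≤ w i + 1 := by
    intro i hi x
    have hwi := hw i (mem_range.mp hi)
    have h1 := (ha i).1; have h2 := (ha i).2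
    have h3 := (hDbd i x).1; have h4 := (hDbd i x).2
    simp only [hg]
    have ht0 : 0 ≤ w i * D i x := mul_nonneg hwi.le h3
    have ht1 : w i * D i x ≤ w i := mul_le_of_le_one_right hwi.le h4
    rw [abs_le]
    constructor
    · nlinarith [mul_nonneg h1 ht0]
    · nlinarith [mul_nonneg h1 ht0, mul_nonneg (by linarith : (0:ℝ) ≤ 1 - a i) ht0]
  -- integrability of products
  have hgmeas : ∀ i, Measurable (g i) := fun i =>
    (measurable_const.mul ((measurable_const.mul (hDmeas i)).sub measurable_const))
  have hint : ∀ i ∈ range N, ∀ j ∈ range N, Integrable (fun x => g i x * g j x) ν := by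
    intro i hi j hj
    refine integrable_of_bdd ((hgmeas i).mul (hgmeas j)) (c := (w i + 1) * (w j + 1)) ?_
    intro x
    rw [abs_mul]
    have hwi := hw i (mem_range.mp hi); have hwj := hw j (mem_range.mp hj)
    exact mul_le_mul (hgbd i hi x) (hgbd j hj x) (abs_nonneg _) (by linarith)
  -- value of each ∫ g i * g j
  have hDint : ∀ i, Integrable (D i) ν := fun i =>
    integrable_of_bdd (hDmeas i) (c := 1) (fun x => by
      rcases hD01 i x with h | h <;> simp [h])
  have hDDint : ∀ i j, Integrable (fun x => D i x * D j x) ν := fun i j =>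
    integrable_of_bdd ((hDmeas i).mul (hDmeas j)) (c := 1) (fun x => by
      rcases hD01 i x with h | h <;> rcases hD01 j x with h' | h' <;> simp [h, h'])
  have hval : ∀ i < N, ∀ j < N,
      ∫ x, g i x * g j x ∂ν = a i * a j * (w i * w j * (∫ x, D i x * D j x ∂ν) - 1) := by
    intro i hi j hj
    have expand : ∀ x, g i x * g j x =
        (a i * a j * (w i * w j)) * (D i x * D j x) - (a i * a j * w i) * D i x
          - (a i * a j * w j) * D j x + a i * a j := by
      intro x; simp only [hg]; ring
    simp_rw [expand]
    rw [integral_add, integral_sub, integral_sub]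
    · rw [integral_const_mul, integral_const_mul, integral_const_mul,
        hmean i hi, hmean j hj, integral_const]
      have hwi := (hw i hi).ne'
      have hwj := (hw j hj).ne'
      simp only [measure_univ, probReal_univ, ENNReal.toReal_one, smul_eq_mul, one_mul]
      field_simp
      ring
    · exact (hDDint i j).const_mul _
    · exact (hDint i).const_mul _
    · exact ((hDDint i j).const_mul _).sub ((hDint i).const_mul _)
    · exact (hDint j).const_mul _
    · exact (((hDDint i j).const_mul _).sub ((hDint i).const_mul _)).sub ((hDint j).const_mul _)
    · exact integrable_const _
  have hbound : ∀ i < N, ∀ j < N,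
      ∫ x, g i x * g j x ∂ν ≤ if i = j then w i else C / N := by
    intro i hi j hj
    rw [hval i hi j hj]
    by_cases hij : i = j
    · subst hij
      rw [if_pos rfl]
      have hDD : (fun x => D i x * D i x) = D i := by
        funext x; rcases hD01 i x with h | h <;> simp [h]
      rw [hDD, hmean i hi]
      have hwi := hw i hi
      have hww : w i * w i * (w i)⁻¹ = w i := by field_simp
      rw [hww]
      have h1 := (ha i).1; have h2 := (ha i).2
      have ha2 : a i * a i ≤ 1 := mul_le_one₀ h2 h1 h2
      have ha2' : 0 ≤ a i * a i := mul_nonneg h1 h1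
      by_cases hw1 : 1 ≤ w i
      · have := mul_le_mul_of_nonneg_right ha2 (by linarith : (0:ℝ) ≤ w i - 1)
        linarith
      · have := mul_nonpos_of_nonneg_of_nonpos ha2' (by linarith : w i - 1 ≤ 0)
        linarith
    · simp only [if_neg hij]
      have hc := hcov i hi j hj hij
      have hwi := hw i hi; have hwj := hw j hj
      have h1 := (ha i).1; have h2 := (ha i).2
      have h3 := (ha j).1; have h4 := (ha j).2
      have hwiwj : w i * w j * ((w i)⁻¹ * (w j)⁻¹) = 1 := by field_simp
      have key : w i * w j * (∫ x, D i x * D j x ∂ν) - 1 ≤ C / N := by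
        have := (abs_le.mp hc).2
        calc w i * w j * (∫ x, D i x * D j x ∂ν) - 1
            = w i * w j * ((∫ x, D i x * D j x ∂ν) - (w i)⁻¹ * (w j)⁻¹) := by
              rw [mul_sub, hwiwj]
          _ ≤ w i * w j * (C / N * ((w i)⁻¹ * (w j)⁻¹)) := by
              apply mul_le_mul_of_nonneg_left this (by positivity)
          _ = C / N := by field_simp
      have keyneg : -(C / N) ≤ w i * w j * (∫ x, D i x * D j x ∂ν) - 1 := by
        have := (abs_le.mp hc).1
        calc -(C / N) = w i * w j * (-(C / N * ((w i)⁻¹ * (w j)⁻¹))) := by field_simp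
          _ ≤ w i * w j * ((∫ x, D i x * D j x ∂ν) - (w i)⁻¹ * (w j)⁻¹) := by
              apply mul_le_mul_of_nonneg_left (by linarith) (by positivity)
          _ = w i * w j * (∫ x, D i x * D j x ∂ν) - 1 := by rw [mul_sub, hwiwj]
      -- a i * a j * q ≤ C/N where |q| ≤ C/N and 0 ≤ a ≤ 1
      have hCN : 0 ≤ C / N := by positivity
      have haa0 : 0 ≤ a i * a j := mul_nonneg h1 h3
      have haa1 : a i * a j ≤ 1 := mul_le_one₀ h2 h3 h4
      calc a i * a j * (w i * w j * (∫ x, D i x * D j x ∂ν) - 1)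
          ≤ a i * a j * (C / N) := mul_le_mul_of_nonneg_left key haa0
        _ ≤ 1 * (C / N) := mul_le_mul_of_nonneg_right haa1 hCN
        _ = C / N := one_mul _
  set Z : Ω' → ℝ := fun x =>
      (N:ℝ)⁻¹ * ∑ i ∈ range N, D i x * w i * a i - (N:ℝ)⁻¹ * ∑ i ∈ range N, a i with hZ
  have hNne : (N:ℝ) ≠ 0 := hNpos.ne'
  have hZg : ∀ x, Z x = (N:ℝ)⁻¹ * ∑ i ∈ range N, g i x := by
    intro x
    simp only [hZ, hg]
    rw [← mul_sub, ← Finset.sum_sub_distrib]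
    congr 1
    refine Finset.sum_congr rfl fun i _ => by ring
  have hZsq : ∀ x, Z x ^ 2 = (N:ℝ)⁻¹ ^ 2 * ∑ i ∈ range N, ∑ j ∈ range N, g i x * g j x := by
    intro x
    rw [hZg x, mul_pow]
    congr 1
    rw [sq, Finset.sum_mul_sum]
  have hIeq : ∫ x, Z x ^ 2 ∂ν
      = (N:ℝ)⁻¹ ^ 2 * ∑ i ∈ range N, ∑ j ∈ range N, ∫ x, g i x * g j x ∂ν := by
    simp_rw [hZsq]
    rw [integral_const_mul]
    congr 1
    rw [integral_finset_sum _ (fun i hi => integrable_finset_sum _ (fun j hj => hint i hi j hj))]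
    refine Finset.sum_congr rfl fun i hi => ?_
    rw [integral_finset_sum _ (fun j hj => hint i hi j hj)]
  have hV : ∫ x, Z x ^ 2 ∂ν ≤ (N:ℝ)⁻¹ ^ 2 * ∑ i ∈ range N, w i + C / N := by
    rw [hIeq]
    have hstep : ∑ i ∈ range N, ∑ j ∈ range N, ∫ x, g i x * g j x ∂ν
        ≤ ∑ i ∈ range N, (w i + (N:ℝ) * (C / N)) := by
      refine Finset.sum_le_sum fun i hi => ?_
      have h1 : ∑ j ∈ range N, ∫ x, g i x * g j x ∂ν
          ≤ ∑ j ∈ range N, (if i = j then w i else C / N) :=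
        Finset.sum_le_sum fun j hj => hbound i (mem_range.mp hi) j (mem_range.mp hj)
      have h2 : ∑ j ∈ range N, (if i = j then w i else C / N)
          = ∑ j ∈ range N, (C / N + if i = j then w i - C / N else 0) := by
        refine Finset.sum_congr rfl fun j _ => ?_
        by_cases h : i = j <;> simp [h]
      have h3 : ∑ j ∈ range N, (C / N + if i = j then w i - C / N else 0)
          = (N:ℝ) * (C / N) + (w i - C / N) := by
        rw [Finset.sum_add_distrib, Finset.sum_const, Finset.card_range,
          Finset.sum_ite_eq (range N) i (fun _ => w i - C / N), if_pos hi]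
        simp [mul_comm]
      have hCN : 0 ≤ C / N := by positivity
      linarith
    have h4 : ∑ i ∈ range N, (w i + (N:ℝ) * (C / N))
        = ∑ i ∈ range N, w i + (N:ℝ) * ((N:ℝ) * (C / N)) := by
      rw [Finset.sum_add_distrib, Finset.sum_const, Finset.card_range]
      ring_nf
    have h5 : (N:ℝ)⁻¹ ^ 2 * (∑ i ∈ range N, w i + (N:ℝ) * ((N:ℝ) * (C / N)))
        = (N:ℝ)⁻¹ ^ 2 * ∑ i ∈ range N, w i + C / N := by
      field_simp
    calc (N:ℝ)⁻¹ ^ 2 * ∑ i ∈ range N, ∑ j ∈ range N, ∫ x, g i x * g j x ∂ν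
        ≤ (N:ℝ)⁻¹ ^ 2 * (∑ i ∈ range N, w i + (N:ℝ) * ((N:ℝ) * (C / N))) := by
          rw [← h4]
          exact mul_le_mul_of_nonneg_left hstep (by positivity)
      _ = _ := h5
  -- Markov step
  have hZmeas : Measurable Z := by
    apply Measurable.sub
    · exact measurable_const.mul (Finset.measurable_sum _ fun i _ =>
        ((hDmeas i).mul measurable_const).mul measurable_const)
    · exact measurable_const
  set B : ℝ := (N:ℝ)⁻¹ * ∑ i ∈ range N, (w i + 1) with hB
  have hZbd : ∀ x, |Z x| ≤ B := by
    intro x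
    rw [hZg x, abs_mul, abs_inv, Nat.abs_cast, hB]
    refine mul_le_mul_of_nonneg_left ?_ (by positivity)
    exact (Finset.abs_sum_le_sum_abs _ _).trans (Finset.sum_le_sum fun i hi => hgbd i hi x)
  have hZsqint : Integrable (fun x => Z x ^ 2) ν := by
    refine integrable_of_bdd (hZmeas.pow_const 2) (c := B ^ 2) fun x => ?_
    calc |Z x ^ 2| = |Z x| ^ 2 := abs_pow _ _
      _ ≤ B ^ 2 := pow_le_pow_left₀ (abs_nonneg _) (hZbd x) 2
  have markov := mul_meas_ge_le_integral_of_nonneg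
    (ae_of_all ν fun x => sq_nonneg (Z x)) hZsqint (δ ^ 2)
  have hsub : {x | δ < |Z x|} ⊆ {x | δ ^ 2 ≤ Z x ^ 2} := by
    intro x hx
    have h : δ ≤ |Z x| := (Set.mem_setOf_eq ▸ hx).le
    have : δ ^ 2 ≤ |Z x| ^ 2 := pow_le_pow_left₀ hδ.le h 2
    simpa [sq_abs] using this
  have hδ2 : (0:ℝ) < δ ^ 2 := by positivity
  calc ν {x | δ < |Z x|} ≤ ν {x | δ ^ 2 ≤ Z x ^ 2} := measure_mono hsub
    _ = ENNReal.ofReal ((ν {x | δ ^ 2 ≤ Z x ^ 2}).toReal) :=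
        (ENNReal.ofReal_toReal (measure_ne_top ν _)).symm
    _ ≤ ENNReal.ofReal (((N:ℝ)⁻¹ ^ 2 * ∑ i ∈ range N, w i + C / N) / δ ^ 2) := by
        refine ENNReal.ofReal_le_ofReal ?_
        rw [le_div_iff₀ hδ2]
        calc (ν {x | δ ^ 2 ≤ Z x ^ 2}).toReal * δ ^ 2
            = δ ^ 2 * (ν {x | δ ^ 2 ≤ Z x ^ 2}).toReal := mul_comm _ _
          _ ≤ ∫ x, Z x ^ 2 ∂ν := markov
          _ ≤ _ := hV

end core

noncomputable def empCDF (N : ℕ) (yv : ℕ → ℝ) (y : ℝ) : ℝ :=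
  (N:ℝ)⁻¹ * ∑ i ∈ Finset.range N, (if yv i ≤ y then (1:ℝ) else 0)

noncomputable def gridT (N k : ℕ) (yv : ℕ → ℝ) (j : ℕ) : Finset ℝ :=
  ((Finset.range N).image yv).filter (fun v => (j:ℝ)/(k:ℝ) ≤ empCDF N yv v)

noncomputable def gridPt (N k : ℕ) (yv : ℕ → ℝ) (j : ℕ) : ℝ :=
  if h : (gridT N k yv j).Nonempty then (gridT N k yv j).min' h else 0

lemma empCDF_nonneg (N : ℕ) (yv : ℕ → ℝ) (y : ℝ) : 0 ≤ empCDF N yv y := by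
  unfold empCDF
  refine mul_nonneg (by positivity) (Finset.sum_nonneg fun i _ => by positivity)

lemma empCDF_le_one (N : ℕ) (yv : ℕ → ℝ) (y : ℝ) : empCDF N yv y ≤ 1 := by
  unfold empCDF
  rcases Nat.eq_zero_or_pos N with h | h
  · simp [h]
  · have hN : (0:ℝ) < N := by exact_mod_cast h
    have : ∑ i ∈ Finset.range N, (if yv i ≤ y then (1:ℝ) else 0)
        ≤ ∑ i ∈ Finset.range N, (1:ℝ) := by
      refine Finset.sum_le_sum fun i _ => by split <;> norm_num
    rw [Finset.sum_const, Finset.card_range] at this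
    calc (N:ℝ)⁻¹ * ∑ i ∈ Finset.range N, (if yv i ≤ y then (1:ℝ) else 0)
        ≤ (N:ℝ)⁻¹ * ((N:ℝ) * 1) := by
          refine mul_le_mul_of_nonneg_left (by simpa using this) (by positivity)
      _ = 1 := by field_simp

lemma empCDF_mono (N : ℕ) (yv : ℕ → ℝ) {y y' : ℝ} (h : y ≤ y') :
    empCDF N yv y ≤ empCDF N yv y' := by
  unfold empCDF
  refine mul_le_mul_of_nonneg_left (Finset.sum_le_sum fun i _ => ?_) (by positivity)
  by_cases hi : yv i ≤ y
  · rw [if_pos hi, if_pos (hi.trans h)]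
  · rw [if_neg hi]; split <;> norm_num

lemma gridT_nonempty {N k : ℕ} (hN : 1 ≤ N) (hk : 1 ≤ k) (yv : ℕ → ℝ) {j : ℕ} (hj : j ≤ k) :
    (gridT N k yv j).Nonempty := by
  have him : ((Finset.range N).image yv).Nonempty := by
    refine Finset.image_nonempty.mpr ⟨0, Finset.mem_range.mpr hN⟩
  set M := ((Finset.range N).image yv).max' him with hM
  refine ⟨M, Finset.mem_filter.mpr ⟨Finset.max'_mem _ _, ?_⟩⟩
  have hall : ∀ i ∈ Finset.range N, yv i ≤ M := fun i hi =>
    Finset.le_max' _ _ (Finset.mem_image_of_mem yv hi)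
  have hone : empCDF N yv M = 1 := by
    unfold empCDF
    have : ∑ i ∈ Finset.range N, (if yv i ≤ M then (1:ℝ) else 0)
        = ∑ i ∈ Finset.range N, (1:ℝ) :=
      Finset.sum_congr rfl fun i hi => if_pos (hall i hi)
    rw [this, Finset.sum_const, Finset.card_range]
    have hN' : (N:ℝ) ≠ 0 := by positivity
    field_simp
    simp
  rw [hone]
  have hk' : (0:ℝ) < k := by exact_mod_cast hk
  rw [div_le_one hk']
  exact_mod_cast hj

lemma gridPt_spec {N k : ℕ} (hN : 1 ≤ N) (hk : 1 ≤ k) (yv : ℕ → ℝ) {j : ℕ} (hj : j ≤ k) :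
    (j:ℝ)/(k:ℝ) ≤ empCDF N yv (gridPt N k yv j) := by
  have h := gridT_nonempty hN hk yv hj
  rw [gridPt, dif_pos h]
  exact (Finset.mem_filter.mp (Finset.min'_mem _ h)).2

lemma gridPt_lt {N k : ℕ} (hN : 1 ≤ N) (hk : 1 ≤ k) (yv : ℕ → ℝ) {j : ℕ}
    (hj1 : 1 ≤ j) (hj : j ≤ k) {y : ℝ} (hy : y < gridPt N k yv j) :
    empCDF N yv y < (j:ℝ)/(k:ℝ) := by
  by_contra hcon
  push_neg at hcon
  -- there is some i < N with yv i ≤ y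
  have hk' : (0:ℝ) < k := by exact_mod_cast hk
  have hjpos : (0:ℝ) < (j:ℝ)/(k:ℝ) := by
    have : (0:ℝ) < j := by exact_mod_cast hj1
    positivity
  have hsum : 0 < ∑ i ∈ Finset.range N, (if yv i ≤ y then (1:ℝ) else 0) := by
    by_contra hs
    push_neg at hs
    have h0 : ∑ i ∈ Finset.range N, (if yv i ≤ y then (1:ℝ) else 0) = 0 :=
      le_antisymm hs (Finset.sum_nonneg fun i _ => by positivity)
    rw [empCDF, h0, mul_zero] at hcon
    linarith
  have hex : ∃ i ∈ Finset.range N, yv i ≤ y := by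
    by_contra hne
    push_neg at hne
    have : ∑ i ∈ Finset.range N, (if yv i ≤ y then (1:ℝ) else 0) = 0 :=
      Finset.sum_eq_zero fun i hi => if_neg (not_le.mpr (hne i hi))
    rw [this] at hsum; exact lt_irrefl _ hsum
  obtain ⟨i0, hi0, hyi0⟩ := hex
  set s := (Finset.range N).filter (fun i => yv i ≤ y) with hs
  have hsne : s.Nonempty := ⟨i0, Finset.mem_filter.mpr ⟨hi0, hyi0⟩⟩
  have hsim : (s.image yv).Nonempty := Finset.image_nonempty.mpr hsne
  set v := (s.image yv).max' hsim with hv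
  obtain ⟨iv, hivs, hiv⟩ := Finset.mem_image.mp (Finset.max'_mem _ hsim)
  have hvy : v ≤ y := by
    rw [hv, ← hiv]; exact (Finset.mem_filter.mp hivs).2
  have hiff : ∀ i ∈ Finset.range N, (yv i ≤ v ↔ yv i ≤ y) := by
    intro i hi
    constructor
    · intro h; exact h.trans hvy
    · intro h; exact Finset.le_max' _ _ (Finset.mem_image_of_mem yv (Finset.mem_filter.mpr ⟨hi, h⟩))
  have hcdf : empCDF N yv v = empCDF N yv y := by
    unfold empCDF; congr 1
    exact Finset.sum_congr rfl fun i hi => by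
      by_cases h : yv i ≤ y
      · rw [if_pos ((hiff i hi).mpr h), if_pos h]
      · rw [if_neg (fun hc => h ((hiff i hi).mp hc)), if_neg h]
  have hvmem : v ∈ gridT N k yv j := by
    refine Finset.mem_filter.mpr ⟨?_, ?_⟩
    · rw [hv, ← hiv]
      exact Finset.mem_image_of_mem yv (Finset.mem_of_mem_filter iv hivs)
    · rw [hcdf]; exact hcon
  have hmin : gridPt N k yv j ≤ v := by
    have h := gridT_nonempty hN hk yv hj
    rw [gridPt, dif_pos h]
    exact Finset.min'_le _ _ hvmem
  linarith

lemma gridPt_strict {N k : ℕ} (hN : 1 ≤ N) (hk : 1 ≤ k) (yv : ℕ → ℝ) {j : ℕ}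
    (hj1 : 1 ≤ j) (hj : j ≤ k) :
    (N:ℝ)⁻¹ * ∑ i ∈ Finset.range N, (if yv i < gridPt N k yv j then (1:ℝ) else 0)
      ≤ (j:ℝ)/(k:ℝ) := by
  set t := gridPt N k yv j with ht
  by_cases hex : ∃ i ∈ Finset.range N, yv i < t
  · obtain ⟨i0, hi0, hyi0⟩ := hex
    set s := (Finset.range N).filter (fun i => yv i < t) with hs
    have hsne : s.Nonempty := ⟨i0, Finset.mem_filter.mpr ⟨hi0, hyi0⟩⟩
    have hsim : (s.image yv).Nonempty := Finset.image_nonempty.mpr hsne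
    set v := (s.image yv).max' hsim with hv
    obtain ⟨iv, hivs, hiv⟩ := Finset.mem_image.mp (Finset.max'_mem _ hsim)
    have hvt : v < t := by
      rw [hv, ← hiv]; exact (Finset.mem_filter.mp hivs).2
    have hiff : ∀ i ∈ Finset.range N, ((yv i < t) ↔ (yv i ≤ v)) := by
      intro i hi
      constructor
      · intro h; exact Finset.le_max' _ _ (Finset.mem_image_of_mem yv (Finset.mem_filter.mpr ⟨hi, h⟩))
      · intro h; exact lt_of_le_of_lt h hvt
    have heq : (N:ℝ)⁻¹ * ∑ i ∈ Finset.range N, (if yv i < t then (1:ℝ) else 0)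
        = empCDF N yv v := by
      unfold empCDF; congr 1
      refine Finset.sum_congr rfl fun i hi => ?_
      by_cases h : yv i < t
      · rw [if_pos h, if_pos ((hiff i hi).mp h)]
      · rw [if_neg h, if_neg (fun hc => h ((hiff i hi).mpr hc))]
    rw [heq]
    exact (gridPt_lt hN hk yv hj1 hj hvt).le
  · push_neg at hex
    have h0 : ∑ i ∈ Finset.range N, (if yv i < t then (1:ℝ) else 0) = 0 :=
      Finset.sum_eq_zero fun i hi => if_neg (not_lt.mpr (hex i hi))
    rw [h0, mul_zero]
    positivity

lemma det_bound
    {N k : ℕ} (hN : 1 ≤ N) (hk : 2 ≤ k)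
    (yv w d : ℕ → ℝ) (hw : ∀ i < N, 0 < w i) (hd : ∀ i, d i = 0 ∨ d i = 1)
    {δ : ℝ} (hδ0 : 0 < δ) (hδh : δ ≤ 1/2)
    (hB : |(N:ℝ)⁻¹ * (∑ i ∈ Finset.range N, d i * w i * 1) -
        (N:ℝ)⁻¹ * (∑ i ∈ Finset.range N, (1:ℝ))| ≤ δ)
    (hGle : ∀ j, 1 ≤ j → j < k →
      |(N:ℝ)⁻¹ * (∑ i ∈ Finset.range N,
          d i * w i * (if yv i ≤ gridPt N k yv j then (1:ℝ) else 0)) -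
        (N:ℝ)⁻¹ * (∑ i ∈ Finset.range N, (if yv i ≤ gridPt N k yv j then (1:ℝ) else 0))| ≤ δ)
    (hGlt : ∀ j, 1 ≤ j → j < k →
      |(N:ℝ)⁻¹ * (∑ i ∈ Finset.range N,
          d i * w i * (if yv i < gridPt N k yv j then (1:ℝ) else 0)) -
        (N:ℝ)⁻¹ * (∑ i ∈ Finset.range N, (if yv i < gridPt N k yv j then (1:ℝ) else 0))| ≤ δ)
    (y : ℝ) :
    |(∑ i ∈ Finset.range N, d i * w i * (if yv i ≤ y then (1:ℝ) else 0)) /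
        (∑ i ∈ Finset.range N, d i * w i) - empCDF N yv y| ≤ 4*δ + 1/(k:ℝ) := by
  have hNpos : (0:ℝ) < N := by exact_mod_cast hN
  have hkpos : (0:ℝ) < k := by exact_mod_cast (le_trans one_le_two hk)
  have hNinv : (0:ℝ) < (N:ℝ)⁻¹ := by positivity
  have hdw : ∀ i < N, 0 ≤ d i * w i := by
    intro i hi
    rcases hd i with h | h <;> simp [h, (hw i hi).le]
  -- the Hajek denominator
  set Bh : ℝ := (N:ℝ)⁻¹ * (∑ i ∈ Finset.range N, d i * w i) with hBh
  have hsum1 : (N:ℝ)⁻¹ * (∑ i ∈ Finset.range N, (1:ℝ)) = 1 := by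
    rw [Finset.sum_const, Finset.card_range]; field_simp; simp
  have hBclose : |Bh - 1| ≤ δ := by
    have : (∑ i ∈ Finset.range N, d i * w i * 1) = ∑ i ∈ Finset.range N, d i * w i := by
      simp
    rw [this, hsum1] at hB
    exact hB
  have hBlo : 1/2 ≤ Bh := by
    have := (abs_le.mp hBclose).1; linarith
  have hBhi : Bh ≤ 3/2 := by
    have := (abs_le.mp hBclose).2; linarith
  have hBpos : 0 < Bh := by linarith
  -- normalized numerators
  set Ah : (ℕ → ℝ) → ℝ := fun c => (N:ℝ)⁻¹ * (∑ i ∈ Finset.range N, d i * w i * c i) with hAh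
  -- rewrite the ratio
  have hratio : ∀ c : ℕ → ℝ,
      (∑ i ∈ Finset.range N, d i * w i * c i) / (∑ i ∈ Finset.range N, d i * w i)
        = Ah c / Bh := by
    intro c
    rw [hAh, hBh, mul_div_mul_left _ _ (ne_of_gt hNinv)]
  -- key ratio closeness
  have hclose : ∀ (u v : ℝ), 0 ≤ v → v ≤ 1 → |u - v| ≤ δ → |u / Bh - v| ≤ 4*δ := by
    intro u v hv0 hv1 huv
    have h1 : |u - v * Bh| ≤ 2*δ := by
      have : u - v * Bh = (u - v) + v * (1 - Bh) := by ring
      rw [this]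
      calc |(u - v) + v * (1 - Bh)| ≤ |u - v| + |v * (1 - Bh)| := abs_add_le _ _
        _ ≤ δ + v * |1 - Bh| := by
            rw [abs_mul, abs_of_nonneg hv0]
            exact add_le_add huv le_rfl
        _ ≤ δ + 1 * δ := by
            have h2 : |1 - Bh| ≤ δ := by rw [abs_sub_comm]; exact hBclose
            have := mul_le_mul hv1 h2 (abs_nonneg _) zero_le_one
            linarith
        _ = 2*δ := by ring
    have h3 : u / Bh - v = (u - v * Bh) / Bh := by
      field_simp
    rw [h3, abs_div, abs_of_pos hBpos]
    rw [div_le_iff₀ hBpos]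
    calc |u - v * Bh| ≤ 2*δ := h1
      _ ≤ (4*δ) * (1/2) := by ring_nf; linarith
      _ ≤ (4*δ) * Bh := by
          refine mul_le_mul_of_nonneg_left hBlo (by linarith)
  -- find the slot jj
  set G : Finset ℕ := (Finset.range k).filter
      (fun j => j = 0 ∨ (1 ≤ j ∧ gridPt N k yv j ≤ y)) with hG
  have hGne : G.Nonempty := ⟨0, Finset.mem_filter.mpr ⟨Finset.mem_range.mpr (by omega), Or.inl rfl⟩⟩
  set jj := G.max' hGne with hjj
  have hjjG := Finset.max'_mem G hGne
  have hjjk : jj < k := Finset.mem_range.mp (Finset.mem_of_mem_filter _ hjjG)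
  have hjjor : jj = 0 ∨ (1 ≤ jj ∧ gridPt N k yv jj ≤ y) := (Finset.mem_filter.mp hjjG).2
  have hnext : jj + 1 < k → y < gridPt N k yv (jj + 1) := by
    intro h
    by_contra hcon
    push_neg at hcon
    have : jj + 1 ∈ G := Finset.mem_filter.mpr
      ⟨Finset.mem_range.mpr h, Or.inr ⟨by omega, hcon⟩⟩
    have := Finset.le_max' G _ this
    omega
  -- bounds on empCDF y
  have hAlo : (jj:ℝ)/(k:ℝ) ≤ empCDF N yv y := by
    rcases hjjor with h | ⟨h1, h2⟩
    · rw [h]; simpa using empCDF_nonneg N yv y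
    · calc (jj:ℝ)/(k:ℝ) ≤ empCDF N yv (gridPt N k yv jj) :=
            gridPt_spec hN (by omega) yv (le_of_lt hjjk)
        _ ≤ empCDF N yv y := empCDF_mono N yv h2
  have hAhi : empCDF N yv y ≤ ((jj:ℝ)+1)/(k:ℝ) := by
    by_cases h : jj + 1 < k
    · have := gridPt_lt hN (by omega) yv (j := jj + 1) (by omega) (by omega) (hnext h)
      push_cast at this ⊢
      linarith
    · have hjk : jj + 1 = k := by omega
      have : ((jj:ℝ)+1)/(k:ℝ) = 1 := by
        rw [show ((jj:ℝ)+1) = ((jj+1 : ℕ):ℝ) by push_cast; ring, hjk]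
        field_simp
      rw [this]
      exact empCDF_le_one N yv y
  -- bounds on the Hajek ratio
  set FH : ℝ := Ah (fun i => if yv i ≤ y then (1:ℝ) else 0) / Bh with hFH
  have hAhmono : ∀ c c' : ℕ → ℝ, (∀ i < N, c i ≤ c' i) → Ah c ≤ Ah c' := by
    intro c c' hcc
    refine mul_le_mul_of_nonneg_left (Finset.sum_le_sum fun i hi => ?_) (le_of_lt hNinv)
    exact mul_le_mul_of_nonneg_left (hcc i (Finset.mem_range.mp hi)) (hdw i (Finset.mem_range.mp hi))
  have hFH0 : 0 ≤ FH := by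
    rw [hFH]
    refine div_nonneg ?_ hBpos.le
    rw [hAh]
    refine mul_nonneg hNinv.le (Finset.sum_nonneg fun i hi => ?_)
    exact mul_nonneg (hdw i (Finset.mem_range.mp hi)) (by positivity)
  have hFlo : (jj:ℝ)/(k:ℝ) - 4*δ ≤ FH := by
    rcases hjjor with h | ⟨h1, h2⟩
    · rw [h]
      push_cast
      rw [zero_div]
      linarith
    · set t := gridPt N k yv jj with ht
      have hmono : Ah (fun i => if yv i ≤ t then (1:ℝ) else 0)
          ≤ Ah (fun i => if yv i ≤ y then (1:ℝ) else 0) := by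
        refine hAhmono _ _ fun i hi => ?_
        by_cases hc : yv i ≤ t
        · rw [if_pos hc, if_pos (hc.trans h2)]
        · rw [if_neg hc]; split <;> norm_num
      have hcdfeq : empCDF N yv t
          = (N:ℝ)⁻¹ * (∑ i ∈ Finset.range N, (if yv i ≤ t then (1:ℝ) else 0)) := rfl
      have hcl := hclose (Ah (fun i => if yv i ≤ t then (1:ℝ) else 0)) (empCDF N yv t)
        (empCDF_nonneg _ _ _) (empCDF_le_one _ _ _)
        (by rw [hcdfeq]; exact hGle jj h1 hjjk)
      have hsp : (jj:ℝ)/(k:ℝ) ≤ empCDF N yv t := gridPt_spec hN (by omega) yv (le_of_lt hjjk)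
      have hdm : Ah (fun i => if yv i ≤ t then (1:ℝ) else 0) / Bh ≤ FH := by
        rw [hFH]
        gcongr
      have := (abs_le.mp hcl).1
      linarith
  have hFhi : FH ≤ ((jj:ℝ)+1)/(k:ℝ) + 4*δ := by
    by_cases h : jj + 1 < k
    · set t' := gridPt N k yv (jj+1) with ht'
      have hy' : y < t' := hnext h
      have hmono : Ah (fun i => if yv i ≤ y then (1:ℝ) else 0)
          ≤ Ah (fun i => if yv i < t' then (1:ℝ) else 0) := by
        refine hAhmono _ _ fun i hi => ?_
        by_cases hc : yv i ≤ y
        · rw [if_pos hc, if_pos (lt_of_le_of_lt hc hy')]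
        · rw [if_neg hc]; split <;> norm_num
      set v' : ℝ := (N:ℝ)⁻¹ * (∑ i ∈ Finset.range N, (if yv i < t' then (1:ℝ) else 0)) with hv'
      have hv'0 : 0 ≤ v' := by
        rw [hv']
        refine mul_nonneg hNinv.le (Finset.sum_nonneg fun i _ => by positivity)
      have hv'1 : v' ≤ 1 := by
        rw [hv']
        have hsum : ∑ i ∈ Finset.range N, (if yv i < t' then (1:ℝ) else 0)
            ≤ ∑ i ∈ Finset.range N, (1:ℝ) :=
          Finset.sum_le_sum fun i _ => by split <;> norm_num
        rw [Finset.sum_const, Finset.card_range] at hsum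
        calc (N:ℝ)⁻¹ * ∑ i ∈ Finset.range N, (if yv i < t' then (1:ℝ) else 0)
            ≤ (N:ℝ)⁻¹ * ((N:ℝ) * 1) := by
              refine mul_le_mul_of_nonneg_left (by simpa using hsum) hNinv.le
          _ = 1 := by field_simp
      have hstrict : v' ≤ ((jj:ℝ)+1)/(k:ℝ) := by
        have := gridPt_strict hN (by omega : 1 ≤ k) yv (j := jj+1) (by omega) (by omega)
        rw [hv', ht']
        push_cast at this ⊢
        linarith
      have hcl := hclose (Ah (fun i => if yv i < t' then (1:ℝ) else 0)) v' hv'0 hv'1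
        (hGlt (jj+1) (by omega) h)
      have hdm : FH ≤ Ah (fun i => if yv i < t' then (1:ℝ) else 0) / Bh := by
        rw [hFH]
        gcongr
      have := (abs_le.mp hcl).2
      linarith
    · have hjk : jj + 1 = k := by omega
      have hone : ((jj:ℝ)+1)/(k:ℝ) = 1 := by
        rw [show ((jj:ℝ)+1) = ((jj+1 : ℕ):ℝ) by push_cast; ring, hjk]
        field_simp
      have hFH1 : FH ≤ 1 := by
        rw [hFH, div_le_one hBpos]
        have : Ah (fun i => if yv i ≤ y then (1:ℝ) else 0) ≤ Ah (fun _ => 1) := by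
          refine hAhmono _ _ fun i hi => by split <;> norm_num
        have hB1 : Ah (fun _ => (1:ℝ)) = Bh := by
          rw [hAh, hBh]
          simp
        rw [hB1] at this
        exact this
      linarith
  -- conclude
  have hrw := hratio (fun i => if yv i ≤ y then (1:ℝ) else 0)
  rw [hrw, ← hFH]
  have hcast : ((jj:ℝ)+1)/(k:ℝ) = (jj:ℝ)/(k:ℝ) + 1/(k:ℝ) := add_div _ _ _
  rw [abs_le]
  constructor
  · linarith
  · linarith
/-- Proposition 2 of the paper: Glivenko–Cantelli-type uniform design-consistency of the
Hájek estimator, for almost all realizations of the superpopulation. -/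
theorem stmt_14
    {Ω Ω' : Type*} [MeasurableSpace Ω] [MeasurableSpace Ω']
    (P : Measure Ω) [IsProbabilityMeasure P]
    (Y X : ℕ → Ω → ℝ)
    (hmeas : ∀ i, Measurable fun ω => (Y i ω, X i ω))
    (hindep : iIndepFun (fun i ω => (Y i ω, X i ω)) P)
    (hident : ∀ i, IdentDistrib (fun ω => (Y i ω, X i ω)) (fun ω => (Y 0 ω, X 0 ω)) P P)
    (hpos : ∀ i, ∀ᵐ ω ∂P, 0 < X i ω)
    (hm2 : Integrable (fun ω => X 0 ω ^ 2) P)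
    (hminv : Integrable (fun ω => (X 0 ω)⁻¹) P)
    (n : ℕ → ℕ) (f : ℝ) (hf0 : 0 < f) (hf1 : f < 1)
    (hfN : Tendsto (fun N : ℕ => (n N : ℝ) / N) atTop (𝓝 f))
    (C : ℝ) (hC : 0 < C)
    (Pd : ℕ → Ω → Measure Ω') (hPd : ∀ N ω, IsProbabilityMeasure (Pd N ω))
    (D : ℕ → ℕ → Ω' → ℝ)
    (hD01 : ∀ N i ω', D N i ω' = 0 ∨ D N i ω' = 1)
    (hDmeas : ∀ N i, Measurable (D N i))
    (hmean : ∀ N (ω : Ω), (∀ j < N, 0 < X j ω) → ∀ i < N,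
      ∫ ω', D N i ω' ∂(Pd N ω) = (n N : ℝ) * X i ω / ∑ j ∈ Finset.range N, X j ω)
    (hcov : ∀ N (ω : Ω), (∀ j < N, 0 < X j ω) → ∀ i < N, ∀ j < N, i ≠ j →
      |(∫ ω', D N i ω' * D N j ω' ∂(Pd N ω)) -
          ((n N : ℝ) * X i ω / ∑ k ∈ Finset.range N, X k ω) *
            ((n N : ℝ) * X j ω / ∑ k ∈ Finset.range N, X k ω)| ≤
        C / N * (((n N : ℝ) * X i ω / ∑ k ∈ Finset.range N, X k ω) *
          ((n N : ℝ) * X j ω / ∑ k ∈ Finset.range N, X k ω))) :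
    ∀ᵐ ω ∂P, ∀ ε > (0 : ℝ),
      Tendsto (fun N : ℕ =>
          Pd N ω {ω' | ε < ⨆ y : ℝ,
            |(∑ i ∈ Finset.range N,
                D N i ω' * ((n N : ℝ) * X i ω / ∑ j ∈ Finset.range N, X j ω)⁻¹ *
                  (if Y i ω ≤ y then (1 : ℝ) else 0)) /
                (∑ i ∈ Finset.range N,
                  D N i ω' * ((n N : ℝ) * X i ω / ∑ j ∈ Finset.range N, X j ω)⁻¹) -
              (N : ℝ)⁻¹ * ∑ i ∈ Finset.range N, (if Y i ω ≤ y then (1 : ℝ) else 0)|})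
        atTop (𝓝 0) := by
  classical
  -- measurability of X
  have hXmeas : ∀ i, Measurable (X i) := fun i => measurable_snd.comp (hmeas i)
  -- integrability of X 0
  have hXint : Integrable (X 0) P := by
    refine (hm2.add (integrable_const 1)).mono' (hXmeas 0).aestronglyMeasurable
      (ae_of_all _ fun ω => ?_)
    simp only [Pi.add_apply]
    rw [Real.norm_eq_abs]
    nlinarith [sq_abs (X 0 ω), sq_nonneg (|X 0 ω| - 1), abs_nonneg (X 0 ω)]
  -- SLLN for X
  have hindepX : Pairwise (Function.onFun (IndepFun · · P) X) := by
    intro i j hij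
    exact (hindep.indepFun hij).comp measurable_snd measurable_snd
  have hidentX : ∀ i, IdentDistrib (X i) (X 0) P P := fun i => (hident i).comp measurable_snd
  have hSLLNX := strong_law_ae X hXint hindepX hidentX
  -- SLLN for X⁻¹
  have hindepXi : Pairwise (Function.onFun (IndepFun · · P) (fun i ω => (X i ω)⁻¹)) := by
    intro i j hij
    exact (hindep.indepFun hij).comp measurable_snd.inv measurable_snd.inv
  have hidentXi : ∀ i, IdentDistrib (fun ω => (X i ω)⁻¹) (fun ω => (X 0 ω)⁻¹) P P :=
    fun i => (hident i).comp measurable_snd.inv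
  have hSLLNXi := strong_law_ae (fun i ω => (X i ω)⁻¹) hminv hindepXi hidentXi
  have hposall : ∀ᵐ ω ∂P, ∀ i, 0 < X i ω := ae_all_iff.mpr hpos
  -- main a.e. statement
  filter_upwards [hSLLNX, hSLLNXi, hposall] with ω hSX hSinv hposω
  intro ε hε
  -- choice of k and δ
  set k : ℕ := max 2 ⌈4/ε⌉₊ with hkdef
  have hk2 : 2 ≤ k := le_max_left _ _
  have hkpos : (0:ℝ) < k := by
    have : (2:ℝ) ≤ k := by exact_mod_cast hk2
    linarith
  have hkR : 4/ε ≤ (k:ℝ) := by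
    calc (4:ℝ)/ε ≤ (⌈4/ε⌉₊ : ℝ) := Nat.le_ceil _
      _ ≤ (k:ℝ) := by exact_mod_cast le_max_right 2 ⌈4/ε⌉₊
  have hkε : 1/(k:ℝ) ≤ ε/4 := by
    rw [div_le_div_iff₀ hkpos (by norm_num : (0:ℝ) < 4)]
    have h4 : 4 ≤ (k:ℝ) * ε := (div_le_iff₀ hε).mp hkR
    linarith
  set δ : ℝ := min (ε/16) (1/2) with hδdef
  have hδ0 : 0 < δ := lt_min (by positivity) one_half_pos
  have hδh : δ ≤ 1/2 := min_le_right _ _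
  have hδε : δ ≤ ε/16 := min_le_left _ _
  -- the real bound sequence
  set b : ℕ → ℝ := fun N =>
    (2*(k:ℝ)) * (((N:ℝ)⁻¹ ^ 2 * ∑ i ∈ Finset.range N,
      ((n N : ℝ) * X i ω / ∑ j ∈ Finset.range N, X j ω)⁻¹ + C / N) / δ ^ 2) with hbdef
  -- the bound tends to 0
  have hnat : Tendsto (fun N : ℕ => ((n N : ℝ))) atTop atTop := by
    have h := hfN.pos_mul_atTop hf0 tendsto_natCast_atTop_atTop
    refine h.congr' ?_
    filter_upwards [eventually_ge_atTop 1] with N hN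
    have hN0 : (N:ℝ) ≠ 0 := by positivity
    field_simp
  have h3 : Tendsto (fun N : ℕ => ((n N : ℝ))⁻¹) atTop (𝓝 0) := hnat.inv_tendsto_atTop
  have h4 : Tendsto (fun N : ℕ => ((N : ℝ))⁻¹) atTop (𝓝 0) :=
    tendsto_inv_atTop_zero.comp tendsto_natCast_atTop_atTop
  have h1 : Tendsto (fun N : ℕ => (N:ℝ)⁻¹ * ∑ i ∈ Finset.range N, X i ω) atTop
      (𝓝 (∫ x, X 0 x ∂P)) := by simpa [smul_eq_mul] using hSX
  have h2 : Tendsto (fun N : ℕ => (N:ℝ)⁻¹ * ∑ i ∈ Finset.range N, (X i ω)⁻¹) atTop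
      (𝓝 (∫ x, (X 0 x)⁻¹ ∂P)) := by simpa [smul_eq_mul] using hSinv
  have hsw : ∀ N : ℕ, ∑ i ∈ Finset.range N,
      ((n N : ℝ) * X i ω / ∑ j ∈ Finset.range N, X j ω)⁻¹
      = (∑ j ∈ Finset.range N, X j ω) * ((n N : ℝ))⁻¹ *
        ∑ i ∈ Finset.range N, (X i ω)⁻¹ := by
    intro N
    rw [mul_assoc, Finset.mul_sum, Finset.mul_sum]
    refine Finset.sum_congr rfl fun i _ => ?_
    rw [inv_div, div_eq_mul_inv, mul_inv]
  have hb_eq : ∀ N : ℕ, b N =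
      (2*(k:ℝ)/δ^2) * (((N:ℝ)⁻¹ * ∑ j ∈ Finset.range N, X j ω) *
        ((N:ℝ)⁻¹ * ∑ i ∈ Finset.range N, (X i ω)⁻¹) * ((n N : ℝ))⁻¹)
      + (2*(k:ℝ)/δ^2*C) * ((N:ℝ))⁻¹ := by
    intro N
    simp only [hbdef]
    rw [hsw N]
    ring
  have hb0 : Tendsto b atTop (𝓝 0) := by
    have H1 := (tendsto_const_nhds (x := (2*(k:ℝ)/δ^2))
      (f := atTop (α := ℕ))).mul ((h1.mul h2).mul h3)
    have H2 := (tendsto_const_nhds (x := (2*(k:ℝ)/δ^2*C)) (f := atTop (α := ℕ))).mul h4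
    have := H1.add H2
    simp only [mul_zero, add_zero, zero_add] at this
    exact (Filter.tendsto_congr hb_eq).mpr (by simpa using this)
  have hofb : Tendsto (fun N => ENNReal.ofReal (b N)) atTop (𝓝 0) := by
    have := (ENNReal.tendsto_ofReal hb0 : Tendsto _ atTop (𝓝 (ENNReal.ofReal 0)))
    simpa using this
  -- eventual bound on the design probability
  have hev : ∀ᶠ N : ℕ in atTop, 1 ≤ N ∧ 1 ≤ n N := by
    filter_upwards [hfN.eventually (eventually_gt_nhds (half_lt_self hf0)),
      eventually_ge_atTop 1] with N h hN1
    refine ⟨hN1, ?_⟩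
    rcases Nat.eq_zero_or_pos (n N) with h0 | h0
    · rw [h0] at h; norm_num at h; linarith
    · exact h0
  refine tendsto_of_tendsto_of_tendsto_of_le_of_le' tendsto_const_nhds hofb
    (Eventually.of_forall fun N => zero_le) ?_
  filter_upwards [hev] with N hN
  obtain ⟨hN1, hn1⟩ := hN
  -- per-N bound
  haveI := hPd N ω
  have hnpos : (0:ℝ) < (n N : ℝ) := by exact_mod_cast hn1
  have hS : (0:ℝ) < ∑ j ∈ Finset.range N, X j ω :=
    Finset.sum_pos (fun i _ => hposω i) ⟨0, Finset.mem_range.mpr hN1⟩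
  set w : ℕ → ℝ := fun i => ((n N : ℝ) * X i ω / ∑ j ∈ Finset.range N, X j ω)⁻¹ with hwdef
  have hw : ∀ i < N, 0 < w i := fun i _ =>
    inv_pos.mpr (div_pos (mul_pos hnpos (hposω i)) hS)
  have hpos' : ∀ j < N, 0 < X j ω := fun j _ => hposω j
  have hmean' : ∀ i < N, ∫ x, D N i x ∂(Pd N ω) = (w i)⁻¹ := by
    intro i hi
    rw [hwdef]
    simp only [inv_inv]
    exact hmean N ω hpos' i hi
  have hcov' : ∀ i < N, ∀ j < N, i ≠ j →
      |(∫ x, D N i x * D N j x ∂(Pd N ω)) - (w i)⁻¹ * (w j)⁻¹| ≤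
        C / N * ((w i)⁻¹ * (w j)⁻¹) := by
    intro i hi j hj hij
    rw [hwdef]
    simp only [inv_inv]
    exact hcov N ω hpos' i hi j hj hij
  set yv : ℕ → ℝ := fun i => Y i ω with hyvdef
  -- bad event family and Chebyshev bound
  set V : ℝ := ((N:ℝ)⁻¹ ^ 2 * ∑ i ∈ Finset.range N, w i + C / N) / δ ^ 2 with hVdef
  set bs : (ℕ → ℝ) → Set Ω' := fun a =>
    {x | δ < |(N:ℝ)⁻¹ * ∑ i ∈ Finset.range N, D N i x * w i * a i -
      (N:ℝ)⁻¹ * ∑ i ∈ Finset.range N, a i|} with hbsdef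
  have hcb : ∀ a : ℕ → ℝ, (∀ i, 0 ≤ a i ∧ a i ≤ 1) →
      Pd N ω (bs a) ≤ ENNReal.ofReal V :=
    fun a ha => chebyshev_weighted hN1 hC.le hw (fun i x => hD01 N i x)
      (fun i => hDmeas N i) hmean' hcov' ha hδ0
  -- the coefficient families
  set aB : ℕ → ℝ := fun _ => 1 with haB
  set aLe : ℕ → ℕ → ℝ := fun j i => if yv i ≤ gridPt N k yv j then 1 else 0 with haLe
  set aLt : ℕ → ℕ → ℝ := fun j i => if yv i < gridPt N k yv j then 1 else 0 with haLt
  set bad : Set Ω' := bs aB ∪ ⋃ j ∈ Finset.Icc 1 (k-1), (bs (aLe j) ∪ bs (aLt j)) with hbad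
  -- inclusion of the sup event into bad
  have hincl : {ω' | ε < ⨆ y : ℝ,
      |(∑ i ∈ Finset.range N,
          D N i ω' * ((n N : ℝ) * X i ω / ∑ j ∈ Finset.range N, X j ω)⁻¹ *
            (if Y i ω ≤ y then (1 : ℝ) else 0)) /
          (∑ i ∈ Finset.range N,
            D N i ω' * ((n N : ℝ) * X i ω / ∑ j ∈ Finset.range N, X j ω)⁻¹) -
        (N : ℝ)⁻¹ * ∑ i ∈ Finset.range N, (if Y i ω ≤ y then (1 : ℝ) else 0)|} ⊆ bad := by
    intro ω' hmem
    by_contra hnb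
    rw [hbad] at hnb
    have hB' : ω' ∉ bs aB := fun h => hnb (Set.mem_union_left _ h)
    have hLe' : ∀ j, 1 ≤ j → j < k → ω' ∉ bs (aLe j) := by
      intro j hj1 hjk h
      exact hnb (Set.mem_union_right _ (Set.mem_iUnion₂.mpr
        ⟨j, Finset.mem_Icc.mpr ⟨hj1, by omega⟩, Set.mem_union_left _ h⟩))
    have hLt' : ∀ j, 1 ≤ j → j < k → ω' ∉ bs (aLt j) := by
      intro j hj1 hjk h
      exact hnb (Set.mem_union_right _ (Set.mem_iUnion₂.mpr
        ⟨j, Finset.mem_Icc.mpr ⟨hj1, by omega⟩, Set.mem_union_right _ h⟩))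
    have hBle : |(N:ℝ)⁻¹ * ∑ i ∈ Finset.range N, D N i ω' * w i * aB i -
        (N:ℝ)⁻¹ * ∑ i ∈ Finset.range N, aB i| ≤ δ := not_lt.mp (fun h => hB' h)
    have hdet : ∀ y : ℝ,
        |(∑ i ∈ Finset.range N, D N i ω' * w i * (if yv i ≤ y then (1:ℝ) else 0)) /
          (∑ i ∈ Finset.range N, D N i ω' * w i) - empCDF N yv y| ≤ 4*δ + 1/(k:ℝ) := by
      refine det_bound hN1 hk2 yv w (fun i => D N i ω') hw (fun i => hD01 N i ω')
        hδ0 hδh hBle ?_ ?_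
      · intro j hj1 hjk
        exact not_lt.mp (fun h => hLe' j hj1 hjk h)
      · intro j hj1 hjk
        exact not_lt.mp (fun h => hLt' j hj1 hjk h)
    have hsup : (⨆ y : ℝ,
        |(∑ i ∈ Finset.range N,
            D N i ω' * ((n N : ℝ) * X i ω / ∑ j ∈ Finset.range N, X j ω)⁻¹ *
              (if Y i ω ≤ y then (1 : ℝ) else 0)) /
            (∑ i ∈ Finset.range N,
              D N i ω' * ((n N : ℝ) * X i ω / ∑ j ∈ Finset.range N, X j ω)⁻¹) -
          (N : ℝ)⁻¹ * ∑ i ∈ Finset.range N, (if Y i ω ≤ y then (1 : ℝ) else 0)|)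
        ≤ 4*δ + 1/(k:ℝ) := by
      refine Real.iSup_le (fun y => ?_) (by positivity)
      have := hdet y
      simpa [empCDF, hwdef, hyvdef] using this
    have : ε < 4*δ + 1/(k:ℝ) := lt_of_lt_of_le hmem hsup
    have : 4*δ + 1/(k:ℝ) ≤ ε/2 := by linarith
    linarith
  -- measure bound
  have hub : Pd N ω bad ≤ ENNReal.ofReal (b N) := by
    have haB' : ∀ i, 0 ≤ aB i ∧ aB i ≤ 1 := fun i => by rw [haB]; norm_num
    have haLe' : ∀ j i, 0 ≤ aLe j i ∧ aLe j i ≤ 1 := fun j i => by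
      rw [haLe]; constructor <;> simp only [] <;> split <;> norm_num
    have haLt' : ∀ j i, 0 ≤ aLt j i ∧ aLt j i ≤ 1 := fun j i => by
      rw [haLt]; constructor <;> simp only [] <;> split <;> norm_num
    have step1 : Pd N ω bad ≤ ENNReal.ofReal V +
        ∑ j ∈ Finset.Icc 1 (k-1), (ENNReal.ofReal V + ENNReal.ofReal V) := by
      rw [hbad]
      refine le_trans (measure_union_le _ _) (add_le_add (hcb aB haB') ?_)
      refine le_trans (measure_biUnion_finset_le _ _) (Finset.sum_le_sum fun j _ => ?_)
      exact le_trans (measure_union_le _ _)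
        (add_le_add (hcb (aLe j) (haLe' j)) (hcb (aLt j) (haLt' j)))
    rw [Finset.sum_const, Nat.card_Icc] at step1
    have hcard : k - 1 + 1 - 1 = k - 1 := by omega
    rw [hcard] at step1
    have step2 : ENNReal.ofReal V + (k-1) • (ENNReal.ofReal V + ENNReal.ofReal V)
        ≤ ((2*k : ℕ) : ℝ≥0∞) * ENNReal.ofReal V := by
      rw [nsmul_eq_mul]
      have heq : ENNReal.ofReal V + ((k-1 : ℕ) : ℝ≥0∞) * (ENNReal.ofReal V + ENNReal.ofReal V)
          = ((2*(k-1)+1 : ℕ) : ℝ≥0∞) * ENNReal.ofReal V := by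
        push_cast
        ring
      rw [heq]
      have hle : ((2*(k-1)+1 : ℕ) : ℝ≥0∞) ≤ ((2*k : ℕ) : ℝ≥0∞) := by
        have : 2*(k-1)+1 ≤ 2*k := by omega
        exact_mod_cast this
      exact mul_le_mul_left hle _
    have step3 : ((2*k : ℕ) : ℝ≥0∞) * ENNReal.ofReal V = ENNReal.ofReal (b N) := by
      rw [← ENNReal.ofReal_natCast, ← ENNReal.ofReal_mul (by positivity)]
      congr 1
      rw [hbdef, hVdef]
      push_cast
      ring
    exact le_trans step1 (le_trans step2 (le_of_eq step3))
  exact le_trans (measure_mono hincl) hub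
end
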